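/- arXiv:1901.07171 — 7 statements merged into one kernel-verified Lean document; each statement's English description precedes it below -/
import Mathlib

section
/- Let Ω be a region (nonempty open connected subset) of ℂ and let F : Ω → M_n(ℂ) be analytic. Suppose there is z₀ ∈ Ω such that ‖F(z)‖ ≤ ‖F(z₀)‖ for all z ∈ Ω, where ‖·‖ is the operator norm, and let x₀ ∈ ℂⁿ be a maximizing vector for F(z₀), i.e., ‖x₀‖ = 1 and ‖F(z₀)x₀‖ = ‖F(z₀)‖. Then F^{(k)}(z₀)x₀ = 0 for every k ≥ 1, and F(z)x₀ = F(z₀)x₀ for all z ∈ Ω. -/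
open scoped Matrix

/-- The Euclidean norm of a vector in `ℂⁿ`. -/
noncomputable def euclNorm {n : ℕ} (x : Fin n → ℂ) : ℝ :=
  Real.sqrt (∑ i, ‖x i‖ ^ 2)

/-- The operator norm of a complex `n × n` matrix induced by the Euclidean norm on `ℂⁿ`. -/
noncomputable def opNorm {n : ℕ} (A : Matrix (Fin n) (Fin n) ℂ) : ℝ :=
  ‖(Matrix.toEuclideanCLM (𝕜 := ℂ) A : EuclideanSpace ℂ (Fin n) →L[ℂ] EuclideanSpace ℂ (Fin n))‖

/-- `sval A k` is the `(k+1)`-st singular value `s_{k+1}(A)` of `A`: the nonnegative square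
roots of the eigenvalues of `Aᴴ * A`, listed in nonincreasing order.  In particular
`sval A 0 = s₁(A)` is the largest singular value (the operator norm) and
`sval A (n-1) = sₙ(A)` is the smallest. -/
noncomputable def sval {n : ℕ} (A : Matrix (Fin n) (Fin n) ℂ) (k : Fin n) : ℝ :=
  let f : Fin n → ℝ := fun i =>
    Real.sqrt ((Matrix.isHermitian_conjTranspose_mul_self A).eigenvalues i)
  (f ∘ Tuple.sort f) k.rev

/-- The Frobenius (Hilbert--Schmidt) norm of a complex matrix: `‖T‖_F = (trace (Tᴴ T))^{1/2}`. -/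
noncomputable def frobNorm {n : ℕ} (A : Matrix (Fin n) (Fin n) ℂ) : ℝ :=
  Real.sqrt ((Matrix.trace (Aᴴ * A)).re)

attribute [local instance] Matrix.normedAddCommGroup Matrix.normedSpace

/-- `A ↦ A *ᵥ x₀` as a continuous linear map into Euclidean space. -/
noncomputable def mulVecCLM {n : ℕ} (x₀ : Fin n → ℂ) :
    Matrix (Fin n) (Fin n) ℂ →L[ℂ] EuclideanSpace ℂ (Fin n) :=
  LinearMap.toContinuousLinearMap
    { toFun := fun A => (WithLp.equiv 2 (Fin n → ℂ)).symm (A.mulVec x₀)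
      map_add' := fun A B => by
        simp only [Matrix.add_mulVec]; rfl
      map_smul' := fun c A => by
        simp only [Matrix.smul_mulVec, RingHom.id_apply]; rfl }

lemma norm_equiv_symm {n : ℕ} (v : Fin n → ℂ) :
    ‖(WithLp.equiv 2 (Fin n → ℂ)).symm v‖ = euclNorm v := by
  rw [EuclideanSpace.norm_eq, euclNorm]
  rfl

lemma mulVecCLM_eq {n : ℕ} (x₀ : Fin n → ℂ) (A : Matrix (Fin n) (Fin n) ℂ) :
    mulVecCLM x₀ A = Matrix.toEuclideanCLM (𝕜 := ℂ) A ((WithLp.equiv 2 (Fin n → ℂ)).symm x₀) := by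
  exact (Matrix.toEuclideanCLM_toLp A x₀).symm

set_option maxHeartbeats 1000000 in
/-- **Maximum Operator Norm Principle.** If `F` is analytic on a region `Ω`, its operator norm
attains its maximum at `z₀ ∈ Ω`, and `x₀` is a maximizing vector for `F z₀`, then
`F⁽ᵏ⁾(z₀) x₀ = 0` for all `k ≥ 1` and `F z x₀ = F z₀ x₀` for all `z ∈ Ω`. -/
theorem maximum_operator_norm_principle {n : ℕ} (Ω : Set ℂ) (hΩ : IsOpen Ω)
    (hconn : IsConnected Ω) (F : ℂ → Matrix (Fin n) (Fin n) ℂ)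
    (hF : ∀ z ∈ Ω, DifferentiableAt ℂ F z) (z₀ : ℂ) (hz₀ : z₀ ∈ Ω)
    (hmax : ∀ z ∈ Ω, opNorm (F z) ≤ opNorm (F z₀))
    (x₀ : Fin n → ℂ) (hx₀ : euclNorm x₀ = 1)
    (hmv : euclNorm ((F z₀).mulVec x₀) = opNorm (F z₀)) :
    (∀ k : ℕ, 1 ≤ k → (iteratedDeriv k F z₀).mulVec x₀ = 0) ∧
      ∀ z ∈ Ω, (F z).mulVec x₀ = (F z₀).mulVec x₀ := by
  classical
  set L : Matrix (Fin n) (Fin n) ℂ →L[ℂ] EuclideanSpace ℂ (Fin n) := mulVecCLM x₀ with hLdef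
  have hLapp : ∀ A : Matrix (Fin n) (Fin n) ℂ,
      L A = (WithLp.equiv 2 (Fin n → ℂ)).symm (A.mulVec x₀) := fun A => rfl
  have hLnorm : ∀ A : Matrix (Fin n) (Fin n) ℂ, ‖L A‖ = euclNorm (A.mulVec x₀) := fun A => by
    rw [hLapp, norm_equiv_symm]
  have hLbound : ∀ A : Matrix (Fin n) (Fin n) ℂ, ‖L A‖ ≤ opNorm A := by
    intro A
    rw [hLdef, mulVecCLM_eq]
    calc ‖Matrix.toEuclideanCLM (𝕜 := ℂ) A ((WithLp.equiv 2 (Fin n → ℂ)).symm x₀)‖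
        ≤ ‖(Matrix.toEuclideanCLM (𝕜 := ℂ) A :
            EuclideanSpace ℂ (Fin n) →L[ℂ] EuclideanSpace ℂ (Fin n))‖ *
            ‖(WithLp.equiv 2 (Fin n → ℂ)).symm x₀‖ :=
          ContinuousLinearMap.le_opNorm _ _
      _ = opNorm A := by rw [norm_equiv_symm, hx₀, mul_one]; rfl
  have hu : ‖L (F z₀)‖ = opNorm (F z₀) := by rw [hLnorm]; exact hmv
  set u : EuclideanSpace ℂ (Fin n) := L (F z₀) with hudef
  set Φ : Matrix (Fin n) (Fin n) ℂ →L[ℂ] ℂ := (innerSL ℂ u).comp L with hΦdef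
  have hΦapp : ∀ A, Φ A = inner (𝕜 := ℂ) u (L A) := fun A => rfl
  have hφd : DifferentiableOn ℂ (fun z => Φ (F z)) Ω := fun z hz =>
    (Φ.differentiableAt.comp z (hF z hz)).differentiableWithinAt
  have hΦz₀ : ‖Φ (F z₀)‖ = ‖u‖ * ‖u‖ := by
    rw [hΦapp, ← hudef, inner_self_eq_norm_sq_to_K]
    simp [sq]
  have hmaxφ : IsMaxOn (norm ∘ fun z => Φ (F z)) Ω z₀ := by
    intro z hz
    simp only [Function.comp_apply, Set.mem_setOf_eq]
    rw [hΦz₀, hΦapp]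
    calc ‖inner (𝕜 := ℂ) u (L (F z))‖ ≤ ‖u‖ * ‖L (F z)‖ := norm_inner_le_norm _ _
      _ ≤ ‖u‖ * ‖u‖ := by
          refine mul_le_mul_of_nonneg_left ?_ (norm_nonneg u)
          exact (hLbound _).trans ((hmax z hz).trans_eq hu.symm)
  have hconst := Complex.eqOn_of_isPreconnected_of_isMaxOn_norm hconn.isPreconnected hΩ hφd
    hz₀ hmaxφ
  have hEq : ∀ z ∈ Ω, L (F z) = u := by
    intro z hz
    have hφz : Φ (F z) = Φ (F z₀) := hconst hz
    set v := L (F z) with hv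
    have h1 : RCLike.re (inner (𝕜 := ℂ) u v) = ‖u‖ ^ 2 := by
      have h2 : inner (𝕜 := ℂ) u v = inner (𝕜 := ℂ) u u := by
        rw [← hΦapp, ← hΦapp]; exact hφz
      rw [h2]
      exact inner_self_eq_norm_sq (𝕜 := ℂ) u
    have hvu : ‖v‖ ≤ ‖u‖ := (hLbound _).trans ((hmax z hz).trans_eq hu.symm)
    have hle : ‖v - u‖ ^ 2 ≤ 0 := by
      rw [norm_sub_sq (𝕜 := ℂ), inner_re_symm (𝕜 := ℂ) v u, h1]
      nlinarith [norm_nonneg v, norm_nonneg u]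
    have h3 : ‖v - u‖ = 0 := by nlinarith [norm_nonneg (v - u)]
    exact sub_eq_zero.mp (norm_eq_zero.mp h3)
  refine ⟨?_, fun z hz => ?_⟩
  · intro k hk
    have hdo : DifferentiableOn ℂ F Ω := fun z hz => (hF z hz).differentiableWithinAt
    have hcd : ContDiffOn ℂ k F Ω := (hdo.analyticOnNhd hΩ).contDiffOn hΩ.uniqueDiffOn
    have e4 : iteratedFDerivWithin ℂ k (⇑L ∘ F) Ω z₀ = iteratedFDeriv ℂ k (⇑L ∘ F) z₀ :=
      iteratedFDerivWithin_of_isOpen k hΩ hz₀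
    have e5 : iteratedFDerivWithin ℂ k F Ω z₀ = iteratedFDeriv ℂ k F z₀ :=
      iteratedFDerivWithin_of_isOpen k hΩ hz₀
    have h1 : iteratedFDeriv ℂ k (⇑L ∘ F) z₀ =
        L.compContinuousMultilinearMap (iteratedFDeriv ℂ k F z₀) := by
      have h := L.iteratedFDerivWithin_comp_left (f := F) (hcd z₀ hz₀) hΩ.uniqueDiffOn hz₀
        (le_refl ((k : ℕ) : WithTop ℕ∞))
      rw [← e4]
      exact h.trans (congrArg L.compContinuousMultilinearMap e5)
    have h2 : iteratedFDeriv ℂ k (⇑L ∘ F) z₀ = 0 := by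
      have e2 : iteratedFDerivWithin ℂ k (⇑L ∘ F) Ω z₀ =
          iteratedFDerivWithin ℂ k (fun _ => u) Ω z₀ :=
        iteratedFDerivWithin_congr (fun z hz => hEq z hz) hz₀ k
      have e3 : iteratedFDerivWithin ℂ k (fun _ : ℂ => u) Ω z₀ =
          iteratedFDeriv ℂ k (fun _ : ℂ => u) z₀ :=
        iteratedFDerivWithin_of_isOpen k hΩ hz₀
      rw [← e4, e2, e3, iteratedFDeriv_const_of_ne (show k ≠ 0 by omega)]
      rfl
    have h3 : L (iteratedDeriv k F z₀) = 0 := by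
      rw [iteratedDeriv_eq_iteratedFDeriv]
      have h4 := congrArg
        (fun m : ContinuousMultilinearMap ℂ (fun _ : Fin k => ℂ) (EuclideanSpace ℂ (Fin n)) =>
          m (fun _ => (1 : ℂ))) (h1.symm.trans h2)
      exact h4
    rw [hLapp] at h3
    exact (WithLp.equiv 2 (Fin n → ℂ)).symm.injective h3
  · have h := hEq z hz
    rw [hudef, hLapp, hLapp] at h
    exact (WithLp.equiv 2 (Fin n → ℂ)).symm.injective h
end

section
/- Let Ω be a region (nonempty open connected subset) of ℂ with n ≥ 2, and let F : Ω → M_n(ℂ) be analytic. If there is z₀ ∈ Ω such that ‖F(z)‖ ≤ ‖F(z₀)‖ for all z ∈ Ω, where ‖·‖ is the operator norm, then there exist constant n×n unitary matrices U and V and an analytic function G : Ω → M_{n-1}(ℂ) such that for every z ∈ Ω, F(z) = U · [[‖F(z₀)‖, 0], [0, G(z)]] · V, where the middle factor is the block-diagonal matrix with (1,1) scalar block ‖F(z₀)‖ and lower-right (n−1)×(n−1) block G(z). -/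
open scoped Matrix

set_option maxHeartbeats 1000000
set_option synthInstance.maxHeartbeats 200000

attribute [local instance] Matrix.normedAddCommGroup Matrix.normedSpace

local notation "⟪" x ", " y "⟫" => @inner ℂ _ _ x y

/-- A continuous linear endomorphism of a nontrivial finite-dimensional complex normed
space attains its operator norm on the unit sphere. -/
lemma my_exists_unit_norm {E : Type*} [NormedAddCommGroup E] [NormedSpace ℂ E]
    [FiniteDimensional ℂ E] [Nontrivial E] (T : E →L[ℂ] E) :
    ∃ v : E, ‖v‖ = 1 ∧ ‖T v‖ = ‖T‖ := by
  obtain ⟨v, hv, hmax⟩ := (isCompact_sphere (0:E) 1).exists_isMaxOn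
    (NormedSpace.sphere_nonempty.mpr zero_le_one)
    (by fun_prop : ContinuousOn (fun x => ‖T x‖) (Metric.sphere 0 1))
  have hv1 : ‖v‖ = 1 := mem_sphere_zero_iff_norm.mp hv
  refine ⟨v, hv1, le_antisymm (by simpa [hv1] using T.le_opNorm v) ?_⟩
  refine T.opNorm_le_bound (norm_nonneg _) fun x => ?_
  rcases eq_or_ne x 0 with rfl | hx
  · simp
  · have hx0 : (0:ℝ) < ‖x‖ := norm_pos_iff.mpr hx
    have hxs : ((‖x‖:ℂ))⁻¹ • x ∈ Metric.sphere (0:E) 1 := by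
      simp [norm_smul, Complex.norm_real, Real.norm_of_nonneg hx0.le,
        inv_mul_cancel₀ hx0.ne']
    have h1 := hmax hxs
    simp only [Set.mem_setOf_eq] at h1
    rw [map_smul, norm_smul, norm_inv, Complex.norm_real,
      Real.norm_of_nonneg hx0.le] at h1
    calc ‖T x‖ = ‖x‖ * (‖x‖⁻¹ * ‖T x‖) := by field_simp
    _ ≤ ‖x‖ * ‖T v‖ := mul_le_mul_of_nonneg_left h1 hx0.le
    _ = ‖T v‖ * ‖x‖ := mul_comm _ _

/-- The "small perturbation" trick: if `‖c + tψ‖² ≤ c²(1 + ‖t‖²)` for all complex `t` and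
`c > 0`, then `ψ = 0`. -/
lemma my_psi_zero {c : ℝ} (hc : 0 < c) {ψ : ℂ}
    (h : ∀ t : ℂ, ‖(c:ℂ) + t * ψ‖^2 ≤ c^2 * (1 + ‖t‖^2)) : ψ = 0 := by
  by_contra hne
  have hψ : 0 < ‖ψ‖ := norm_pos_iff.mpr hne
  have hp0 : 0 < ‖ψ‖^2 := pow_pos hψ 2
  set p := ‖ψ‖^2 with hp
  set s := c / (c^2 + p) with hs_def
  have hs : 0 < s := div_pos hc (by positivity)
  have hsc : s * (c^2 + p) = c := by
    rw [hs_def]; field_simp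
  have key := h ((s:ℂ) * (starRingEnd ℂ ψ))
  have hcm : (starRingEnd ℂ ψ) * ψ = ((p : ℝ) : ℂ) := by
    rw [mul_comm, Complex.mul_conj, hp]
    norm_cast
    rw [Complex.normSq_eq_norm_sq]
  have h1 : (c:ℂ) + ((s:ℂ) * (starRingEnd ℂ ψ)) * ψ = ((c + s * p : ℝ) : ℂ) := by
    rw [mul_assoc, hcm]; push_cast; ring
  have h2 : ‖(s:ℂ) * (starRingEnd ℂ ψ)‖ = s * ‖ψ‖ := by
    rw [norm_mul, Complex.norm_real, RCLike.norm_conj, Real.norm_of_nonneg hs.le]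
  rw [h1, h2] at key
  have h3 : ‖((c + s * p : ℝ) : ℂ)‖ = c + s * p := by
    rw [Complex.norm_real, Real.norm_of_nonneg (by positivity)]
  rw [h3] at key
  have hps : (s*‖ψ‖)^2 = s^2 * p := by rw [hp]; ring
  rw [hps] at key
  nlinarith [mul_pos hs hp0, hc, hp0, hs]

/-- Equality case of Cauchy–Schwarz in the form needed here. -/
lemma my_cs_eq {E : Type*} [NormedAddCommGroup E] [InnerProductSpace ℂ E]
    {u y : E} {c : ℝ} (hc : 0 < c) (hu : ‖u‖ = 1)
    (hin : ⟪u, y⟫ = (c:ℂ)) (hy : ‖y‖ ≤ c) : y = (c:ℂ) • u := by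
  have hu0 : u ≠ 0 := by intro h; rw [h] at hu; simp at hu
  have hy0 : y ≠ 0 := by
    intro h; rw [h, inner_zero_right] at hin
    have : c = 0 := by exact_mod_cast hin.symm
    exact hc.ne' this
  have hnin : ‖⟪u, y⟫‖ = c := by
    rw [hin, Complex.norm_real, Real.norm_of_nonneg hc.le]
  have hle : ‖⟪u, y⟫‖ ≤ ‖u‖ * ‖y‖ := norm_inner_le_norm u y
  have hyc : ‖y‖ = c := le_antisymm hy (by rw [hu, one_mul] at hle; linarith [hnin ▸ hle])
  have heq : ‖⟪u, y⟫‖ = ‖u‖ * ‖y‖ := by rw [hnin, hu, one_mul, hyc]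
  obtain ⟨r, hr, rfl⟩ := (norm_inner_eq_norm_iff hu0 hy0).mp heq
  have hru : ⟪u, r • u⟫ = r := by
    rw [inner_smul_right, inner_self_eq_norm_sq_to_K, hu]; push_cast; ring
  rw [hru] at hin
  rw [hin]

/-- Entries of a differentiable matrix-valued function are differentiable. -/
lemma my_entry_diff {k l : ℕ} {F : ℂ → Matrix (Fin k) (Fin l) ℂ} {z : ℂ}
    (h : DifferentiableAt ℂ F z) (i : Fin k) (j : Fin l) :
    DifferentiableAt ℂ (fun w => F w i j) z :=
  differentiableAt_pi.mp (differentiableAt_pi.mp h i) j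

/-- A matrix-valued function with differentiable entries is differentiable. -/
lemma my_pi_diff {k l : ℕ} {G : ℂ → Matrix (Fin k) (Fin l) ℂ} {z : ℂ}
    (h : ∀ i j, DifferentiableAt ℂ (fun w => G w i j) z) :
    DifferentiableAt ℂ G z :=
  differentiableAt_pi.mpr fun i => differentiableAt_pi.mpr (h i)

/-- Entry of a conjugated matrix as an inner product. -/
lemma my_entry_inner {n : ℕ} (A U W : Matrix (Fin n) (Fin n) ℂ)
    (b d : Fin n → EuclideanSpace ℂ (Fin n))
    (hU : ∀ i j, U i j = b j i) (hW : ∀ i j, W i j = d j i) (i j : Fin n) :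
    (Uᴴ * A * W) i j = ⟪b i, (Matrix.toEuclideanCLM (𝕜 := ℂ) A) (d j)⟫ := by
  have hA : ∀ k, ((Matrix.toEuclideanCLM (𝕜 := ℂ) A) (d j)) k = (A.mulVec (d j)) k :=
    fun _ => rfl
  simp only [PiLp.inner_apply, RCLike.inner_apply, hA, Matrix.mulVec, Matrix.mul_apply,
    Matrix.conjTranspose_apply, dotProduct, hU, hW]
  simp only [Finset.sum_mul, Finset.mul_sum]
  rw [Finset.sum_comm]
  refine Finset.sum_congr rfl fun k _ => Finset.sum_congr rfl fun l _ => ?_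
  simp only [RCLike.star_def]
  ring

/-- The matrix whose columns are an orthonormal basis is unitary. -/
lemma my_col_unitary {n : ℕ} (b : OrthonormalBasis (Fin n) ℂ (EuclideanSpace ℂ (Fin n))) :
    (Matrix.of fun i j => b j i)ᴴ * (Matrix.of fun i j => b j i) = 1 := by
  ext i j
  have h := orthonormal_iff_ite.mp b.orthonormal i j
  simp only [PiLp.inner_apply, RCLike.inner_apply] at h
  simpa [Matrix.mul_apply, Matrix.conjTranspose_apply, Matrix.one_apply,
    RCLike.star_def, mul_comm] using h

/-- If `F : Ω → Mₙ(ℂ)` (here `n = 1 + m` with `m ≥ 1`, so `n ≥ 2`) is analytic on a region `Ω`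
and its operator norm attains its maximum at `z₀ ∈ Ω`, then there are constant unitary matrices
`U`, `V` and an analytic `G : Ω → M_{n-1}(ℂ)` with
`F z = U * [[‖F z₀‖, 0], [0, G z]] * V` on `Ω`. -/
theorem maximum_operator_norm_factorization {m : ℕ} (hm : 1 ≤ m)
    (Ω : Set ℂ) (hΩ : IsOpen Ω) (hconn : IsConnected Ω)
    (F : ℂ → Matrix (Fin (1 + m)) (Fin (1 + m)) ℂ)
    (hF : ∀ z ∈ Ω, DifferentiableAt ℂ F z) (z₀ : ℂ) (hz₀ : z₀ ∈ Ω)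
    (hmax : ∀ z ∈ Ω, opNorm (F z) ≤ opNorm (F z₀)) :
    ∃ U V : Matrix (Fin (1 + m)) (Fin (1 + m)) ℂ,
      Uᴴ * U = 1 ∧ U * Uᴴ = 1 ∧ Vᴴ * V = 1 ∧ V * Vᴴ = 1 ∧
      ∃ G : ℂ → Matrix (Fin m) (Fin m) ℂ, (∀ z ∈ Ω, DifferentiableAt ℂ G z) ∧
        ∀ z ∈ Ω,
          F z = U * (Matrix.reindex finSumFinEquiv finSumFinEquiv
            (Matrix.fromBlocks (Matrix.diagonal fun _ : Fin 1 => (opNorm (F z₀) : ℂ))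
              0 0 (G z))) * V := by
  set c : ℝ := opNorm (F z₀) with hc_def
  have hc0 : 0 ≤ c := by rw [hc_def]; unfold opNorm; exact norm_nonneg _
  rcases hc0.eq_or_lt with hc | hc
  · -- degenerate case : F ≡ 0
    refine ⟨1, 1, by simp, by simp, by simp, by simp, fun _ => 0,
      fun z hz => differentiableAt_const _, fun z hz => ?_⟩
    have h0 : opNorm (F z) = 0 := le_antisymm (hc ▸ hmax z hz) (by unfold opNorm; positivity)
    have hFz : F z = 0 := by
      apply (Matrix.toEuclideanCLM (𝕜 := ℂ) (n := Fin (1+m))).injective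
      rw [map_zero]
      exact norm_eq_zero.mp h0
    rw [hFz, ← hc]
    simp
  · -- main case
    have hdim : (0 : ℕ) < 1 + m := by omega
    haveI : NeZero (1 + m) := ⟨by omega⟩
    haveI : Nontrivial (EuclideanSpace ℂ (Fin (1 + m))) := by
      infer_instance
    obtain ⟨v, hv1, hvmax⟩ := my_exists_unit_norm (Matrix.toEuclideanCLM (𝕜 := ℂ) (F z₀))
    have hTz₀ : ‖(Matrix.toEuclideanCLM (𝕜 := ℂ) (F z₀)) v‖ = c := hvmax
    set u : EuclideanSpace ℂ (Fin (1 + m)) :=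
      ((c : ℂ))⁻¹ • (Matrix.toEuclideanCLM (𝕜 := ℂ) (F z₀)) v with hu_def
    have hu1 : ‖u‖ = 1 := by
      rw [hu_def, norm_smul, norm_inv, Complex.norm_real, Real.norm_of_nonneg hc.le, hTz₀]
      field_simp
    have hTv : (Matrix.toEuclideanCLM (𝕜 := ℂ) (F z₀)) v = (c : ℂ) • u := by
      rw [hu_def, smul_smul, mul_inv_cancel₀ (by exact_mod_cast hc.ne'), one_smul]
    -- the bound on inner products
    have hbound : ∀ z ∈ Ω, ∀ x : EuclideanSpace ℂ (Fin (1 + m)),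
        ‖⟪u, (Matrix.toEuclideanCLM (𝕜 := ℂ) (F z)) x⟫‖ ≤ c * ‖x‖ := by
      intro z hz x
      calc ‖⟪u, (Matrix.toEuclideanCLM (𝕜 := ℂ) (F z)) x⟫‖
          ≤ ‖u‖ * ‖(Matrix.toEuclideanCLM (𝕜 := ℂ) (F z)) x‖ := norm_inner_le_norm _ _
        _ = ‖(Matrix.toEuclideanCLM (𝕜 := ℂ) (F z)) x‖ := by rw [hu1, one_mul]
        _ ≤ ‖(Matrix.toEuclideanCLM (𝕜 := ℂ) (F z))‖ * ‖x‖ :=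
            ContinuousLinearMap.le_opNorm _ _
        _ ≤ c * ‖x‖ := by
            exact mul_le_mul_of_nonneg_right (hmax z hz) (norm_nonneg _)
    -- the scalar function φ
    set φ : ℂ → ℂ := fun z => ⟪u, (Matrix.toEuclideanCLM (𝕜 := ℂ) (F z)) v⟫ with hφ_def
    have hφz₀ : φ z₀ = (c : ℂ) := by
      rw [hφ_def]
      simp only [hTv, inner_smul_right]
      rw [inner_self_eq_norm_sq_to_K, hu1]
      push_cast; ring
    have hφdiff : DifferentiableOn ℂ φ Ω := by
      intro z hz
      apply DifferentiableAt.differentiableWithinAt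
      have hrw : φ = fun w => ∑ k, ∑ l, (starRingEnd ℂ) (u k) * (F w k l * v l) := by
        funext w
        have hA : ∀ k, ((Matrix.toEuclideanCLM (𝕜 := ℂ) (F w)) v) k = ((F w).mulVec v) k :=
          fun _ => rfl
        simp only [hφ_def, PiLp.inner_apply, RCLike.inner_apply, hA, Matrix.mulVec,
          dotProduct, Finset.mul_sum]
        refine Finset.sum_congr rfl fun k _ => ?_
        rw [Finset.sum_mul]
        exact Finset.sum_congr rfl fun l _ => mul_comm _ _
      rw [hrw]
      apply DifferentiableAt.fun_sum; intro k _
      apply DifferentiableAt.fun_sum; intro l _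
      exact ((my_entry_diff (hF z hz) k l).mul_const (v l)).const_mul _
    have hφmax : IsMaxOn (norm ∘ φ) Ω z₀ := by
      intro z hz
      simp only [Function.comp_apply, Set.mem_setOf_eq, hφz₀, Complex.norm_real,
        Real.norm_of_nonneg hc.le]
      calc ‖φ z‖ ≤ c * ‖v‖ := hbound z hz v
        _ = c := by rw [hv1, mul_one]
    have hφconst : ∀ z ∈ Ω, φ z = (c : ℂ) := by
      intro z hz
      have := Complex.eqOn_of_isPreconnected_of_isMaxOn_norm hconn.isPreconnected hΩ
        hφdiff hz₀ hφmax hz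
      rw [this, Function.const_apply, hφz₀]
    -- orthonormal bases extending u and v
    have hcard : Module.finrank ℂ (EuclideanSpace ℂ (Fin (1 + m)))
        = Fintype.card (Fin (1 + m)) := by
      simp [finrank_euclideanSpace]
    have hsingle : ∀ w : EuclideanSpace ℂ (Fin (1 + m)), ‖w‖ = 1 →
        Orthonormal ℂ (({0} : Set (Fin (1 + m))).restrict fun _ => w) := by
      intro w hw
      refine orthonormal_iff_ite.mpr fun i j => ?_
      have hij : i = j := Subtype.ext ((Set.mem_singleton_iff.mp i.2).trans
        (Set.mem_singleton_iff.mp j.2).symm)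
      simp only [hij, if_pos rfl, Set.restrict_apply]
      rw [inner_self_eq_norm_sq_to_K]
      simp only [if_true]
      show ((‖w‖ : ℝ) : ℂ) ^ 2 = 1
      rw [hw]
      push_cast; ring
    obtain ⟨b, hb⟩ := Orthonormal.exists_orthonormalBasis_extension_of_card_eq
      (𝕜 := ℂ) hcard (hsingle u hu1)
    obtain ⟨d, hd⟩ := Orthonormal.exists_orthonormalBasis_extension_of_card_eq
      (𝕜 := ℂ) hcard (hsingle v hv1)
    have hb0 : b 0 = u := hb 0 rfl
    have hd0 : d 0 = v := hd 0 rfl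
    set U : Matrix (Fin (1 + m)) (Fin (1 + m)) ℂ := Matrix.of fun i j => b j i with hU_def
    set W : Matrix (Fin (1 + m)) (Fin (1 + m)) ℂ := Matrix.of fun i j => d j i with hW_def
    have hUU : Uᴴ * U = 1 := my_col_unitary b
    have hUU' : U * Uᴴ = 1 := mul_eq_one_comm.mp hUU
    have hWW : Wᴴ * W = 1 := my_col_unitary d
    have hWW' : W * Wᴴ = 1 := mul_eq_one_comm.mp hWW
    have hUapp : ∀ i j, U i j = b j i := fun _ _ => rfl
    have hWapp : ∀ i j, W i j = d j i := fun _ _ => rfl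
    -- entries of the conjugated matrix
    have hentry : ∀ z, ∀ i j, (Uᴴ * F z * W) i j
        = ⟪b i, (Matrix.toEuclideanCLM (𝕜 := ℂ) (F z)) (d j)⟫ :=
      fun z => my_entry_inner (F z) U W b d hUapp hWapp
    -- the first column is c • u
    have hcol : ∀ z ∈ Ω, (Matrix.toEuclideanCLM (𝕜 := ℂ) (F z)) v = (c : ℂ) • u := by
      intro z hz
      refine my_cs_eq hc hu1 (hφconst z hz) ?_
      calc ‖(Matrix.toEuclideanCLM (𝕜 := ℂ) (F z)) v‖
          ≤ ‖(Matrix.toEuclideanCLM (𝕜 := ℂ) (F z))‖ * ‖v‖ :=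
            ContinuousLinearMap.le_opNorm _ _
        _ ≤ c * 1 := by
            exact mul_le_mul (hmax z hz) hv1.le (norm_nonneg _) hc.le
        _ = c := mul_one c
    -- the first row is (c, 0, ..., 0)
    have hrow : ∀ z ∈ Ω, ∀ j : Fin (1 + m), j ≠ 0 →
        ⟪u, (Matrix.toEuclideanCLM (𝕜 := ℂ) (F z)) (d j)⟫ = 0 := by
      intro z hz j hj
      apply my_psi_zero hc
      intro t
      have hval : ⟪u, (Matrix.toEuclideanCLM (𝕜 := ℂ) (F z)) v⟫ = (c : ℂ) := hφconst z hz
      have hlin : ⟪u, (Matrix.toEuclideanCLM (𝕜 := ℂ) (F z)) (v + t • d j)⟫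
          = (c : ℂ) + t * ⟪u, (Matrix.toEuclideanCLM (𝕜 := ℂ) (F z)) (d j)⟫ := by
        rw [map_add, map_smul, inner_add_right, inner_smul_right, hval]
      have hvd : ⟪v, d j⟫ = 0 := by
        rw [← hd0]
        exact d.orthonormal.2 (Ne.symm hj)
      have hnorm2 : ‖v + t • d j‖^2 = 1 + ‖t‖^2 := by
        rw [@norm_add_sq ℂ, inner_smul_right, hvd, mul_zero, norm_smul]
        simp [hv1, d.orthonormal.1 j]
      have hb1 := hbound z hz (v + t • d j)
      rw [hlin] at hb1
      calc ‖(c:ℂ) + t * ⟪u, (Matrix.toEuclideanCLM (𝕜 := ℂ) (F z)) (d j)⟫‖^2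
          ≤ (c * ‖v + t • d j‖)^2 := by
            exact pow_le_pow_left₀ (norm_nonneg _) hb1 2
        _ = c^2 * (1 + ‖t‖^2) := by rw [mul_pow, hnorm2]
    -- define G
    set G : ℂ → Matrix (Fin m) (Fin m) ℂ := fun z => Matrix.of fun i j =>
      (Uᴴ * F z * W) (finSumFinEquiv (Sum.inr i)) (finSumFinEquiv (Sum.inr j)) with hG_def
    refine ⟨U, Wᴴ, hUU, hUU',
      by rw [Matrix.conjTranspose_conjTranspose]; exact hWW',
      by rw [Matrix.conjTranspose_conjTranspose]; exact hWW, G, ?_, ?_⟩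
    · -- G is differentiable on Ω
      intro z hz
      apply my_pi_diff
      intro i j
      have : (fun w => G w i j) = fun w =>
          ∑ l, (∑ k, Uᴴ (finSumFinEquiv (Sum.inr i)) k * F w k l)
            * W l (finSumFinEquiv (Sum.inr j)) := by
        funext w
        simp only [hG_def, Matrix.of_apply, Matrix.mul_apply]
      rw [this]
      apply DifferentiableAt.fun_sum; intro l _
      apply DifferentiableAt.mul_const
      apply DifferentiableAt.fun_sum; intro k _
      exact (my_entry_diff (hF z hz) k l).const_mul _
    · -- the factorization
      intro z hz
      have hfac : F z = U * (Uᴴ * F z * W) * Wᴴ := by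
        have h1 : U * (Uᴴ * F z * W) * Wᴴ = (U * Uᴴ) * F z * (W * Wᴴ) := by
          noncomm_ring
        rw [h1, hUU', hWW', Matrix.one_mul, Matrix.mul_one]
      rw [hfac]
      congr 1
      congr 1
      -- show Uᴴ * F z * W equals the block matrix
      ext i j
      rw [Matrix.reindex_apply, Matrix.submatrix_apply]
      rcases hi : finSumFinEquiv.symm i with a | a <;>
        rcases hj : finSumFinEquiv.symm j with a' | a'
      · -- (0,0) entry
        have ha : a = 0 := Subsingleton.elim a 0
        have ha' : a' = 0 := Subsingleton.elim a' 0
        have hieq : i = 0 := by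
          rw [(by rw [← hi, Equiv.apply_symm_apply] : finSumFinEquiv (Sum.inl a) = i).symm, ha]
          exact Fin.ext (by simp)
        have hjeq : j = 0 := by
          rw [(by rw [← hj, Equiv.apply_symm_apply] : finSumFinEquiv (Sum.inl a') = j).symm, ha']
          exact Fin.ext (by simp)
        have hval : ⟪u, (Matrix.toEuclideanCLM (𝕜 := ℂ) (F z)) v⟫ = (c : ℂ) := hφconst z hz
        rw [hieq, hjeq, hentry z 0 0, hb0, hd0, hval, ha, ha']
        simp [Matrix.fromBlocks_apply₁₁]
      · -- first row, j ≠ 0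
        have hieq : i = 0 := by
          rw [(by rw [← hi, Equiv.apply_symm_apply] : finSumFinEquiv (Sum.inl a) = i).symm,
            Subsingleton.elim a 0]
          exact Fin.ext (by simp)
        have hjeq : j = finSumFinEquiv (Sum.inr a') := by rw [← hj, Equiv.apply_symm_apply]
        have hjne : (finSumFinEquiv (Sum.inr a') : Fin (1 + m)) ≠ 0 := by
          simp only [finSumFinEquiv_apply_right]
          intro h
          have := congrArg Fin.val h
          simp [Fin.natAdd] at this
        rw [hieq, hjeq, hentry z 0 _, hb0]
        rw [hrow z hz _ hjne]
        simp [Matrix.fromBlocks_apply₁₂]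
      · -- first column, i ≠ 0
        have hjeq : j = 0 := by
          rw [(by rw [← hj, Equiv.apply_symm_apply] : finSumFinEquiv (Sum.inl a') = j).symm,
            Subsingleton.elim a' 0]
          exact Fin.ext (by simp)
        have hieq : i = finSumFinEquiv (Sum.inr a) := by rw [← hi, Equiv.apply_symm_apply]
        have hine : (finSumFinEquiv (Sum.inr a) : Fin (1 + m)) ≠ 0 := by
          simp only [finSumFinEquiv_apply_right]
          intro h
          have := congrArg Fin.val h
          simp [Fin.natAdd] at this
        rw [hjeq, hieq, hentry z _ 0, hd0, hcol z hz, inner_smul_right, ← hb0,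
          b.orthonormal.2 hine, mul_zero, Subsingleton.elim a' 0]
        simp [Matrix.fromBlocks_apply₂₁]
      · -- lower right block
        have hieq : i = finSumFinEquiv (Sum.inr a) := by rw [← hi, Equiv.apply_symm_apply]
        have hjeq : j = finSumFinEquiv (Sum.inr a') := by rw [← hj, Equiv.apply_symm_apply]
        rw [hieq, hjeq]
        simp only [Matrix.fromBlocks_apply₂₂]
        rfl
end

section
/- Let Ω be a region (nonempty open connected subset) of ℂ and let F : Ω → M_n(ℂ) be analytic. The following are equivalent: (1) F is constant on Ω; (2) for every k = 1, …, n, the function z ↦ s_k(F(z)) is constant on Ω; (3) for every k = 1, …, n, the function z ↦ s_k(F(z)) attains its maximum value at some point z_k ∈ Ω; (4) the Frobenius norm ‖F(z)‖_F is constant on Ω; (5) the Frobenius norm ‖F(z)‖_F attains its maximum value at some z₀ ∈ Ω. -/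
open scoped Matrix

attribute [local instance] Matrix.normedAddCommGroup Matrix.normedSpace


open Finset Matrix
open scoped InnerProductSpace

lemma budget {N : ℕ} (g t : Fin N → ℝ) (hg : Monotone g) (hg0 : ∀ i, 0 ≤ g i)
    (ht0 : ∀ i, 0 ≤ t i) (ht1 : ∀ i, t i ≤ 1) (r : Fin N)
    (hsum : ∑ i, t i ≤ (N : ℝ) - r.1) :
    ∑ i, g i * t i ≤ ∑ i ∈ Finset.Ici r, g i := by
  classical
  have hsplit : ∀ f : Fin N → ℝ, ∑ i, f i = ∑ i ∈ Finset.Ici r, f i + ∑ i ∈ Finset.Iio r, f i := by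
    intro f
    rw [← Finset.sum_add_sum_compl (Finset.Ici r) f]
    congr 1
    apply Finset.sum_congr _ (fun _ _ => rfl)
    ext i
    simp [Finset.mem_compl, Finset.mem_Ici, Finset.mem_Iio, not_le]
  have hcard : (Finset.Ici r).card = N - r.1 := Fin.card_Ici r
  have h1 : ∑ i ∈ Finset.Iio r, g i * t i ≤ g r * ∑ i ∈ Finset.Iio r, t i := by
    rw [Finset.mul_sum]
    refine Finset.sum_le_sum fun i hi => ?_
    exact mul_le_mul_of_nonneg_right (hg (le_of_lt (Finset.mem_Iio.mp hi))) (ht0 i)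
  have h2 : ∑ i ∈ Finset.Iio r, t i ≤ ∑ i ∈ Finset.Ici r, (1 - t i) := by
    have huniv := hsplit t
    have hs : ∑ i ∈ Finset.Ici r, (1 - t i) = (N - r.1 : ℕ) - ∑ i ∈ Finset.Ici r, t i := by
      rw [Finset.sum_sub_distrib, Finset.sum_const, hcard, nsmul_eq_mul, mul_one]
    have hcast : ((N - r.1 : ℕ) : ℝ) = (N : ℝ) - r.1 := by
      rw [Nat.cast_sub (le_of_lt r.2)]
    rw [hs, hcast]
    linarith
  calc ∑ i, g i * t i
      ≤ ∑ i ∈ Finset.Ici r, g i * t i + g r * ∑ i ∈ Finset.Iio r, t i := by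
        rw [hsplit (fun i => g i * t i)]; linarith
    _ ≤ ∑ i ∈ Finset.Ici r, g i * t i + g r * ∑ i ∈ Finset.Ici r, (1 - t i) := by
        have := mul_le_mul_of_nonneg_left h2 (hg0 r); linarith
    _ = ∑ i ∈ Finset.Ici r, (g i * t i + g r * (1 - t i)) := by
        rw [Finset.mul_sum, ← Finset.sum_add_distrib]
    _ ≤ ∑ i ∈ Finset.Ici r, g i := by
        refine Finset.sum_le_sum fun i hi => ?_
        have hri : r ≤ i := Finset.mem_Ici.mp hi
        have := hg hri
        nlinarith [ht0 i, ht1 i, hg0 i]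

namespace SvalAux

variable {n : ℕ}

noncomputable abbrev TA (A : Matrix (Fin n) (Fin n) ℂ) :
    EuclideanSpace ℂ (Fin n) →L[ℂ] EuclideanSpace ℂ (Fin n) :=
  Matrix.toEuclideanCLM (𝕜 := ℂ) A

noncomputable abbrev wB (A : Matrix (Fin n) (Fin n) ℂ) :
    OrthonormalBasis (Fin n) ℂ (EuclideanSpace ℂ (Fin n)) :=
  (Matrix.isHermitian_conjTranspose_mul_self A).eigenvectorBasis

noncomputable abbrev lam (A : Matrix (Fin n) (Fin n) ℂ) (i : Fin n) : ℝ :=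
  (Matrix.isHermitian_conjTranspose_mul_self A).eigenvalues i


/-- unsorted singular values -/
noncomputable def svf (A : Matrix (Fin n) (Fin n) ℂ) : Fin n → ℝ := fun i =>
  Real.sqrt ((Matrix.isHermitian_conjTranspose_mul_self A).eigenvalues i)

lemma svf_nonneg (A : Matrix (Fin n) (Fin n) ℂ) (i : Fin n) : 0 ≤ svf A i :=
  Real.sqrt_nonneg _

lemma svf_sq (A : Matrix (Fin n) (Fin n) ℂ) (i : Fin n) :
    svf A i ^ 2 = lam A i :=
  Real.sq_sqrt (Matrix.eigenvalues_conjTranspose_mul_self_nonneg A i)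

lemma sval_eq (A : Matrix (Fin n) (Fin n) ℂ) (k : Fin n) :
    sval A k = svf A (Tuple.sort (svf A) k.rev) := rfl

lemma sval_nonneg (A : Matrix (Fin n) (Fin n) ℂ) (k : Fin n) : 0 ≤ sval A k :=
  Real.sqrt_nonneg _

lemma sval_antitone (A : Matrix (Fin n) (Fin n) ℂ) : Antitone (sval A) := by
  intro i j hij
  exact Tuple.monotone_sort (svf A) (Fin.rev_le_rev.mpr hij)

lemma trace_re (A : Matrix (Fin n) (Fin n) ℂ) :
    (Matrix.trace (Aᴴ * A)).re = ∑ i, (Matrix.isHermitian_conjTranspose_mul_self A).eigenvalues i := by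
  set hB := Matrix.isHermitian_conjTranspose_mul_self A
  have h := hB.spectral_theorem
  have : Matrix.trace (Aᴴ * A) = ∑ i, ((hB.eigenvalues i : ℂ)) := by
    conv_lhs => rw [h]
    rw [Unitary.conjStarAlgAut_apply, Matrix.trace_mul_cycle, (Unitary.mem_iff.mp hB.eigenvectorUnitary.2).1, Matrix.one_mul,
      Matrix.trace_diagonal]
    rfl
  rw [this, Complex.re_sum]
  rfl

lemma sum_sval_sq (A : Matrix (Fin n) (Fin n) ℂ) :
    ∑ k, sval A k ^ 2 = (Matrix.trace (Aᴴ * A)).re := by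
  rw [trace_re]
  have h1 : ∑ k : Fin n, sval A k ^ 2
      = ∑ k : Fin n, (svf A (Tuple.sort (svf A) k)) ^ 2 := by
    rw [← Equiv.sum_comp (Fin.revPerm) (fun k => (svf A (Tuple.sort (svf A) k)) ^ 2)]
    rfl
  rw [h1, Equiv.sum_comp (Tuple.sort (svf A)) (fun k => (svf A k) ^ 2)]
  exact Finset.sum_congr rfl fun i _ => svf_sq A i

lemma frobNorm_eq (A : Matrix (Fin n) (Fin n) ℂ) :
    frobNorm A = Real.sqrt (∑ k, sval A k ^ 2) := by
  rw [frobNorm, sum_sval_sq]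

lemma inner_TA (A : Matrix (Fin n) (Fin n) ℂ) (x y : EuclideanSpace ℂ (Fin n)) :
    ⟪TA A x, TA A y⟫_ℂ = ⟪x, TA (Aᴴ * A) y⟫_ℂ := by
  have h1 : TA (n := n) (Aᴴ * A) = TA Aᴴ ∘L TA A := by
    show Matrix.toEuclideanCLM (𝕜 := ℂ) (Aᴴ * A) = _
    rw [_root_.map_mul]; rfl
  have h2 : TA (n := n) Aᴴ = ContinuousLinearMap.adjoint (TA A) := by
    rw [← ContinuousLinearMap.star_eq_adjoint]
    show Matrix.toEuclideanCLM (𝕜 := ℂ) Aᴴ = _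
    rw [← Matrix.star_eq_conjTranspose, map_star (Matrix.toEuclideanCLM (𝕜 := ℂ)) A]
  rw [h1, h2]
  simp [ContinuousLinearMap.adjoint_inner_right]

lemma TB_apply_w (A : Matrix (Fin n) (Fin n) ℂ) (j : Fin n) :
    TA (Aᴴ * A) (wB A j) = ((lam A j : ℂ)) • wB A j := by
  have h := (Matrix.isHermitian_conjTranspose_mul_self A).mulVec_eigenvectorBasis j
  apply (WithLp.equiv 2 ((Fin n) → ℂ)).injective
  show (Aᴴ * A) *ᵥ (wB A j).ofLp = WithLp.equiv 2 _ (((lam A j : ℂ)) • wB A j)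
  rw [h]
  ext i
  simp [Complex.real_smul]

lemma inner_TA_w (A : Matrix (Fin n) (Fin n) ℂ) (i j : Fin n) :
    ⟪TA A (wB A i), TA A (wB A j)⟫_ℂ = if i = j then (lam A j : ℂ) else 0 := by
  rw [inner_TA, TB_apply_w, inner_smul_right]
  rcases eq_or_ne i j with h | h
  · subst h
    simp [(wB A).orthonormal.1 i, inner_self_eq_norm_sq_to_K]
  · rw [(wB A).orthonormal.2 h]
    simp [h]

/-- normalized images of eigenvectors: left singular vectors (or `0`). -/
noncomputable def up (A : Matrix (Fin n) (Fin n) ℂ) (j : Fin n) : EuclideanSpace ℂ (Fin n) :=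
  if svf A j = 0 then 0 else ((svf A j : ℂ))⁻¹ • TA A (wB A j)

lemma lam_eq_zero {A : Matrix (Fin n) (Fin n) ℂ} {j : Fin n} (h : svf A j = 0) :
    lam A j = 0 := by
  have := svf_sq A j
  rw [h] at this
  simpa using this.symm

lemma TA_w_eq (A : Matrix (Fin n) (Fin n) ℂ) (j : Fin n) :
    TA A (wB A j) = (svf A j : ℂ) • up A j := by
  rcases eq_or_ne (svf A j) 0 with h | h
  · have h2 : ⟪TA A (wB A j), TA A (wB A j)⟫_ℂ = 0 := by
      rw [inner_TA_w]; simp [lam_eq_zero h]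
    rw [inner_self_eq_zero.mp h2, up, if_pos h, h]
    simp
  · rw [up, if_neg h, smul_smul]
    rw [mul_inv_cancel₀ (by exact_mod_cast h), one_smul]

lemma inner_up (A : Matrix (Fin n) (Fin n) ℂ) (i j : Fin n) :
    ⟪up A i, up A j⟫_ℂ =
      if i = j ∧ svf A j ≠ 0 then 1 else 0 := by
  rcases eq_or_ne (svf A i) 0 with hi | hi
  · rw [up, if_pos hi]
    rcases eq_or_ne i j with rfl | hij
    · simp [hi]
    · simp [hij]
  rcases eq_or_ne (svf A j) 0 with hj | hj
  · rw [up, up, if_pos hj]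
    simp [hj]
  rw [up, up, if_neg hi, if_neg hj, inner_smul_left, inner_smul_right, inner_TA_w]
  rcases eq_or_ne i j with rfl | hij
  · rw [if_pos rfl, if_pos ⟨rfl, hj⟩]
    rw [← Complex.ofReal_inv, Complex.conj_ofReal]
    rw [← svf_sq A i]
    push_cast
    have : (svf A i : ℂ) ≠ 0 := by exact_mod_cast hj
    field_simp
  · rw [if_neg hij, if_neg (by simp [hij])]
    simp

lemma norm_up_le (A : Matrix (Fin n) (Fin n) ℂ) (j : Fin n) : ‖up A j‖ ≤ 1 := by
  have h := inner_up A j j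
  rcases eq_or_ne (svf A j) 0 with hj | hj
  · rw [up, if_pos hj]; simp
  · rw [if_pos ⟨rfl, hj⟩] at h
    have h2 : ‖up A j‖ ^ 2 = 1 := by
      have := inner_self_eq_norm_sq (𝕜 := ℂ) (up A j)
      rw [h] at this
      simpa using this.symm
    nlinarith [norm_nonneg (up A j)]

lemma bessel_up (A : Matrix (Fin n) (Fin n) ℂ) (x : EuclideanSpace ℂ (Fin n)) :
    ∑ j, ‖⟪x, up A j⟫_ℂ‖ ^ 2 ≤ ‖x‖ ^ 2 := by
  classical
  have hsub : Orthonormal ℂ (fun j : {j : Fin n // svf A j ≠ 0} => up A j.1) := by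
    rw [orthonormal_iff_ite]
    intro a b
    rw [inner_up]
    rcases eq_or_ne a b with rfl | hab
    · simp [a.2]
    · have : a.1 ≠ b.1 := fun h => hab (Subtype.ext h)
      simp [this, hab]
  have hbessel := hsub.sum_inner_products_le (s := Finset.univ) x
  have hzero : ∀ j, svf A j = 0 → ‖⟪x, up A j⟫_ℂ‖ ^ 2 = 0 := by
    intro j hj
    rw [up, if_pos hj]
    simp
  calc ∑ j, ‖⟪x, up A j⟫_ℂ‖ ^ 2
      = ∑ j ∈ Finset.univ.filter (fun j => svf A j ≠ 0), ‖⟪x, up A j⟫_ℂ‖ ^ 2 := by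
        rw [Finset.sum_filter_of_ne]
        intro j _ h
        by_contra hj
        exact h (hzero j hj)
    _ = ∑ j : {j : Fin n // svf A j ≠ 0}, ‖⟪x, up A j.1⟫_ℂ‖ ^ 2 := by
        rw [← Finset.sum_subtype_eq_sum_filter]
        simp
    _ = ∑ j : {j : Fin n // svf A j ≠ 0}, ‖⟪up A j.1, x⟫_ℂ‖ ^ 2 := by
        refine Finset.sum_congr rfl fun j _ => ?_
        rw [norm_inner_symm]
    _ ≤ ‖x‖ ^ 2 := hbessel


lemma norm_real_coe (r : ℝ) (h : 0 ≤ r) : ‖(r : ℂ)‖ = r := by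
  rw [Complex.norm_real, Real.norm_eq_abs, abs_of_nonneg h]

lemma cs_sum {m : ℕ} (p q : Fin m → ℝ) (hp : ∀ i, 0 ≤ p i) (hq : ∀ i, 0 ≤ q i) :
    ∑ i, p i * q i ≤ Real.sqrt (∑ i, p i ^ 2) * Real.sqrt (∑ i, q i ^ 2) := by
  have h := Finset.sum_mul_sq_le_sq_mul_sq Finset.univ p q
  have h1 : 0 ≤ ∑ i, p i * q i :=
    Finset.sum_nonneg fun i _ => mul_nonneg (hp i) (hq i)
  rw [← Real.sqrt_mul_self h1]
  rw [← Real.sqrt_mul (Finset.sum_nonneg fun i _ => sq_nonneg (p i))]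
  exact Real.sqrt_le_sqrt (by nlinarith)

lemma kyfan (A : Matrix (Fin n) (Fin n) ℂ) (k : Fin n) {m : ℕ} (hm : m ≤ k.1 + 1)
    (u v : Fin m → EuclideanSpace ℂ (Fin n)) (hu : Orthonormal ℂ u) (hv : Orthonormal ℂ v) :
    ‖∑ i, ⟪u i, TA A (v i)⟫_ℂ‖ ≤ ∑ i ∈ Finset.Iic k, sval A i := by
  classical
  set d : Fin n → ℂ := fun j => ∑ i, ⟪wB A j, v i⟫_ℂ * ⟪u i, up A j⟫_ℂ with hd
  set t : Fin n → ℝ := fun j => ‖d j‖ with ht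
  -- Step 1: rewrite the sum
  have hS : ∑ i, ⟪u i, TA A (v i)⟫_ℂ = ∑ j, (svf A j : ℂ) * d j := by
    have hexp : ∀ i, ⟪u i, TA A (v i)⟫_ℂ
        = ∑ j, (svf A j : ℂ) * (⟪wB A j, v i⟫_ℂ * ⟪u i, up A j⟫_ℂ) := by
      intro i
      conv_lhs => rw [← (wB A).sum_repr' (v i)]
      rw [map_sum, inner_sum]
      refine Finset.sum_congr rfl fun j _ => ?_
      rw [_root_.map_smul, TA_w_eq, inner_smul_right, inner_smul_right]
      ring
    rw [Finset.sum_congr rfl fun i _ => hexp i, Finset.sum_comm]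
    refine Finset.sum_congr rfl fun j _ => ?_
    rw [hd, Finset.mul_sum]
  -- Step 2: pointwise bounds on t
  have ht0 : ∀ j, 0 ≤ t j := fun j => norm_nonneg _
  have haux : ∀ j, t j ≤ Real.sqrt (∑ i, ‖⟪wB A j, v i⟫_ℂ‖ ^ 2)
      * Real.sqrt (∑ i, ‖⟪u i, up A j⟫_ℂ‖ ^ 2) := by
    intro j
    calc t j ≤ ∑ i, ‖⟪wB A j, v i⟫_ℂ * ⟪u i, up A j⟫_ℂ‖ := norm_sum_le _ _
      _ = ∑ i, ‖⟪wB A j, v i⟫_ℂ‖ * ‖⟪u i, up A j⟫_ℂ‖ := by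
          refine Finset.sum_congr rfl fun i _ => norm_mul _ _
      _ ≤ _ := cs_sum _ _ (fun i => norm_nonneg _) (fun i => norm_nonneg _)
  have hA1 : ∀ j, ∑ i, ‖⟪wB A j, v i⟫_ℂ‖ ^ 2 ≤ 1 := by
    intro j
    have h0 : ∑ i, ‖⟪v i, wB A j⟫_ℂ‖ ^ 2 ≤ ‖wB A j‖ ^ 2 :=
      hv.sum_inner_products_le (wB A j)
    rw [(wB A).orthonormal.1 j, one_pow] at h0
    refine le_trans (le_of_eq ?_) h0
    exact Finset.sum_congr rfl fun i _ => by rw [norm_inner_symm]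
  have hB1 : ∀ j, ∑ i, ‖⟪u i, up A j⟫_ℂ‖ ^ 2 ≤ 1 := by
    intro j
    have h1 : ∑ i, ‖⟪u i, up A j⟫_ℂ‖ ^ 2 ≤ ‖up A j‖ ^ 2 :=
      hu.sum_inner_products_le (up A j)
    have h2 : ‖up A j‖ ^ 2 ≤ 1 := by
      have := norm_up_le A j
      nlinarith [norm_nonneg (up A j)]
    exact le_trans h1 h2
  have ht1 : ∀ j, t j ≤ 1 := by
    intro j
    calc t j ≤ _ := haux j
      _ ≤ 1 * 1 := by
          apply mul_le_mul _ _ (Real.sqrt_nonneg _) zero_le_one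
          · exact Real.sqrt_le_one.mpr (hA1 j)
          · exact Real.sqrt_le_one.mpr (hB1 j)
      _ = 1 := mul_one 1
  -- Step 3: sum bound on t
  have htsum : ∑ j, t j ≤ (m : ℝ) := by
    have hstep : ∑ j, t j ≤ Real.sqrt (∑ j, ∑ i, ‖⟪wB A j, v i⟫_ℂ‖ ^ 2)
        * Real.sqrt (∑ j, ∑ i, ‖⟪u i, up A j⟫_ℂ‖ ^ 2) := by
      calc ∑ j, t j ≤ ∑ j, Real.sqrt (∑ i, ‖⟪wB A j, v i⟫_ℂ‖ ^ 2)
          * Real.sqrt (∑ i, ‖⟪u i, up A j⟫_ℂ‖ ^ 2) :=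
            Finset.sum_le_sum fun j _ => haux j
        _ ≤ _ := by
            have := cs_sum (fun j => Real.sqrt (∑ i, ‖⟪wB A j, v i⟫_ℂ‖ ^ 2))
              (fun j => Real.sqrt (∑ i, ‖⟪u i, up A j⟫_ℂ‖ ^ 2))
              (fun j => Real.sqrt_nonneg _) (fun j => Real.sqrt_nonneg _)
            refine le_trans this ?_
            apply mul_le_mul _ _ (Real.sqrt_nonneg _) (Real.sqrt_nonneg _)
            · apply Real.sqrt_le_sqrt
              refine Finset.sum_le_sum fun j _ => le_of_eq ?_
              rw [Real.sq_sqrt (Finset.sum_nonneg fun i _ => sq_nonneg _)]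
            · apply Real.sqrt_le_sqrt
              refine Finset.sum_le_sum fun j _ => le_of_eq ?_
              rw [Real.sq_sqrt (Finset.sum_nonneg fun i _ => sq_nonneg _)]
    have hfst : ∑ j, ∑ i, ‖⟪wB A j, v i⟫_ℂ‖ ^ 2 ≤ (m : ℝ) := by
      rw [Finset.sum_comm]
      calc ∑ i, ∑ j, ‖⟪wB A j, v i⟫_ℂ‖ ^ 2
          ≤ ∑ i : Fin m, (1 : ℝ) := by
            refine Finset.sum_le_sum fun i _ => ?_
            have := (wB A).orthonormal.sum_inner_products_le (s := Finset.univ) (v i)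
            rw [hv.1 i] at this
            simpa using this
        _ = m := by simp
    have hsnd : ∑ j, ∑ i, ‖⟪u i, up A j⟫_ℂ‖ ^ 2 ≤ (m : ℝ) := by
      rw [Finset.sum_comm]
      calc ∑ i, ∑ j, ‖⟪u i, up A j⟫_ℂ‖ ^ 2
          ≤ ∑ i : Fin m, (1 : ℝ) := by
            refine Finset.sum_le_sum fun i _ => ?_
            have := bessel_up A (u i)
            rw [hu.1 i] at this
            simpa using this
        _ = m := by simp
    calc ∑ j, t j ≤ _ := hstep
      _ ≤ Real.sqrt m * Real.sqrt m := by
          apply mul_le_mul _ _ (Real.sqrt_nonneg _) (Real.sqrt_nonneg _)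
          · exact Real.sqrt_le_sqrt hfst
          · exact Real.sqrt_le_sqrt hsnd
      _ = m := Real.mul_self_sqrt (Nat.cast_nonneg m)
  -- Step 4: norm bound and budget
  have hnorm : ‖∑ i, ⟪u i, TA A (v i)⟫_ℂ‖ ≤ ∑ j, svf A j * t j := by
    rw [hS]
    calc ‖∑ j, (svf A j : ℂ) * d j‖ ≤ ∑ j, ‖(svf A j : ℂ) * d j‖ := norm_sum_le _ _
      _ = ∑ j, svf A j * t j := by
          refine Finset.sum_congr rfl fun j _ => ?_
          rw [norm_mul, norm_real_coe _ (svf_nonneg A j)]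
  refine le_trans hnorm ?_
  -- reindex by the sorting permutation
  set σ := Tuple.sort (svf A) with hσ
  have hre : ∑ j, svf A j * t j = ∑ j, (svf A (σ j)) * t (σ j) :=
    (Equiv.sum_comp σ (fun j => svf A j * t j)).symm
  rw [hre]
  have hrev : ((n : ℝ) - (k.rev : Fin n).1) = k.1 + 1 := by
    have h1 : (k.rev : Fin n).1 = n - (k.1 + 1) := rfl
    rw [h1, Nat.cast_sub k.2]
    push_cast
    ring
  have hb := budget (fun j => svf A (σ j)) (fun j => t (σ j))
    (Tuple.monotone_sort (svf A)) (fun j => svf_nonneg A _) (fun j => ht0 _)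
    (fun j => ht1 _) k.rev
    (by
      rw [hrev]
      have : ∑ j, t (σ j) = ∑ j, t j := Equiv.sum_comp σ t
      rw [this]
      calc ∑ j, t j ≤ (m : ℝ) := htsum
        _ ≤ k.1 + 1 := by exact_mod_cast hm)
  refine le_trans hb (le_of_eq ?_)
  refine Finset.sum_nbij' (fun j => j.rev) (fun i => i.rev) ?_ ?_ ?_ ?_ ?_
  · intro j hj
    rw [Finset.mem_Iic]
    rw [Finset.mem_Ici] at hj
    exact Fin.rev_le_rev.mp (by simpa using hj)
  · intro i hi
    rw [Finset.mem_Ici]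
    rw [Finset.mem_Iic] at hi
    exact Fin.rev_le_rev.mpr (by simpa using hi)
  · intro j _; exact Fin.rev_rev j
  · intro i _; exact Fin.rev_rev i
  · intro j _
    rw [sval_eq]
    congr 1
    rw [Fin.rev_rev]



lemma attain (A : Matrix (Fin n) (Fin n) ℂ) (k : Fin n) (hpos : 0 < sval A k) :
    ∃ u v : Fin (k.1 + 1) → EuclideanSpace ℂ (Fin n), Orthonormal ℂ u ∧ Orthonormal ℂ v ∧
      ∑ i, ⟪u i, TA A (v i)⟫_ℂ = ((∑ i ∈ Finset.Iic k, sval A i : ℝ) : ℂ) := by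
  classical
  set σ := Tuple.sort (svf A) with hσ
  set ji : Fin (k.1 + 1) → Fin n := fun i => σ (Fin.castLE k.2 i).rev with hji
  have hji_inj : Function.Injective ji := by
    intro a b hab
    have h1 := σ.injective hab
    have h2 := Fin.rev_injective h1
    exact Fin.castLE_injective k.2 h2
  have hsv : ∀ i : Fin (k.1 + 1), sval A (Fin.castLE k.2 i) = svf A (ji i) := fun i =>
    sval_eq A (Fin.castLE k.2 i)
  have hposi : ∀ i : Fin (k.1 + 1), 0 < svf A (ji i) := by
    intro i
    rw [← hsv]
    refine lt_of_lt_of_le hpos (sval_antitone A ?_)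
    exact Fin.le_def.mpr (by simpa using Fin.is_le i)
  refine ⟨fun i => up A (ji i), fun i => wB A (ji i), ?_, ?_, ?_⟩
  · rw [orthonormal_iff_ite]
    intro a b
    rw [inner_up]
    rcases eq_or_ne a b with rfl | hab
    · simp [(hposi a).ne']
    · have : ji a ≠ ji b := fun h => hab (hji_inj h)
      simp [this, hab]
  · exact (wB A).orthonormal.comp ji hji_inj
  · have hterm : ∀ i : Fin (k.1 + 1),
        ⟪up A (ji i), TA A (wB A (ji i))⟫_ℂ = ((svf A (ji i) : ℝ) : ℂ) := by
      intro i
      rw [TA_w_eq, inner_smul_right, inner_up, if_pos ⟨rfl, (hposi i).ne'⟩, mul_one]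
    rw [Finset.sum_congr rfl fun i _ => hterm i]
    have hc : ∑ i : Fin (k.1+1), ((svf A (ji i) : ℝ) : ℂ)
        = (((∑ i : Fin (k.1+1), svf A (ji i)) : ℝ) : ℂ) := by push_cast; rfl
    rw [hc]
    congr 1
    refine Finset.sum_nbij' (fun (i : Fin (k.1+1)) => Fin.castLE k.2 i)
      (fun (j : Fin n) => if h : j ≤ k then ⟨j.1, by omega⟩ else 0) ?_ ?_ ?_ ?_ ?_
    · intro i _
      rw [Finset.mem_Iic]
      exact Fin.le_def.mpr (by simpa using Fin.is_le i)
    · intro j hj; exact Finset.mem_univ _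
    · intro i _
      rw [dif_pos (show Fin.castLE k.2 i ≤ k from Fin.le_def.mpr (by simpa using Fin.is_le i))]
      ext; simp
    · intro j hj
      rw [Finset.mem_Iic] at hj
      rw [dif_pos hj]
      ext; simp
    · intro i _
      exact (hsv i).symm

/-- entries of a matrix as a Euclidean vector -/
noncomputable def ems : Matrix (Fin n) (Fin n) ℂ →ₗ[ℂ] EuclideanSpace ℂ (Fin n × Fin n) where
  toFun A := (WithLp.equiv 2 _).symm (fun p => A p.1 p.2)
  map_add' A B := rfl
  map_smul' c A := rfl

lemma ems_inj : Function.Injective (ems (n := n)) := by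
  intro A B h
  ext i j
  exact congrFun (congrArg (WithLp.equiv 2 _) h) (i, j)

lemma frobNorm_eq_norm_ems (A : Matrix (Fin n) (Fin n) ℂ) : frobNorm A = ‖ems A‖ := by
  rw [EuclideanSpace.norm_eq, frobNorm]
  congr 1
  have htr : (Matrix.trace (Aᴴ * A)).re = ∑ j, ∑ i, ‖A i j‖ ^ 2 := by
    rw [Matrix.trace, Complex.re_sum]
    refine Finset.sum_congr rfl fun j _ => ?_
    rw [Matrix.diag, Matrix.mul_apply, Complex.re_sum]
    refine Finset.sum_congr rfl fun i _ => ?_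
    rw [Matrix.conjTranspose_apply]
    rw [show star (A i j) * A i j = (Complex.normSq (A i j) : ℂ) by
      rw [Complex.normSq_eq_conj_mul_self]; rfl]
    rw [Complex.ofReal_re, ← Complex.sq_norm]
  rw [htr, Fintype.sum_prod_type, Finset.sum_comm]
  rfl

/-- the analytic scalar function used in the singular-value argument, as a linear map -/
noncomputable def phi {m : ℕ} (u v : Fin m → EuclideanSpace ℂ (Fin n)) :
    Matrix (Fin n) (Fin n) ℂ →ₗ[ℂ] ℂ where
  toFun A := ∑ i, ⟪u i, TA A (v i)⟫_ℂ
  map_add' A B := by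
    simp only [_root_.map_add, ContinuousLinearMap.add_apply, inner_add_right]
    rw [Finset.sum_add_distrib]
  map_smul' c A := by
    simp only [_root_.map_smul, ContinuousLinearMap.smul_apply, inner_smul_right,
      RingHom.id_apply]
    rw [smul_eq_mul, Finset.mul_sum]

lemma phi_diff {m : ℕ} (u v : Fin m → EuclideanSpace ℂ (Fin n))
    (F : ℂ → Matrix (Fin n) (Fin n) ℂ) {z : ℂ} (hF : DifferentiableAt ℂ F z) :
    DifferentiableAt ℂ (fun w => ∑ i, ⟪u i, TA (F w) (v i)⟫_ℂ) z := by
  have := ((phi u v).toContinuousLinearMap.differentiableAt (x := F z)).comp z hF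
  exact this

lemma ems_diff (F : ℂ → Matrix (Fin n) (Fin n) ℂ) {z : ℂ} (hF : DifferentiableAt ℂ F z) :
    DifferentiableAt ℂ (fun w => ems (F w)) z :=
  ((ems (n := n)).toContinuousLinearMap.differentiableAt (x := F z)).comp z hF


end SvalAux

/-- For an analytic `F` on a region `Ω`, the following are equivalent:
(1) `F` is constant on `Ω`;
(2) every singular value function `z ↦ s_k(F z)` is constant on `Ω`;
(3) every singular value function `z ↦ s_k(F z)` attains its maximum at some point of `Ω`;
(4) the Frobenius norm `z ↦ ‖F z‖_F` is constant on `Ω`;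
(5) the Frobenius norm `z ↦ ‖F z‖_F` attains its maximum at some `z₀ ∈ Ω`. -/
theorem constant_tfae {n : ℕ} (Ω : Set ℂ) (hΩ : IsOpen Ω) (hconn : IsConnected Ω)
    (F : ℂ → Matrix (Fin n) (Fin n) ℂ) (hF : ∀ z ∈ Ω, DifferentiableAt ℂ F z) :
    [(∀ z ∈ Ω, ∀ w ∈ Ω, F z = F w),
     (∀ k : Fin n, ∀ z ∈ Ω, ∀ w ∈ Ω, sval (F z) k = sval (F w) k),
     (∀ k : Fin n, ∃ zk ∈ Ω, ∀ z ∈ Ω, sval (F z) k ≤ sval (F zk) k),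
     (∀ z ∈ Ω, ∀ w ∈ Ω, frobNorm (F z) = frobNorm (F w)),
     (∃ z₀ ∈ Ω, ∀ z ∈ Ω, frobNorm (F z) ≤ frobNorm (F z₀))].TFAE := by
  classical
  obtain ⟨z₀, hz₀⟩ := hconn.nonempty
  tfae_have 1 → 2
  · exact fun h k z hz w hw => by rw [h z hz w hw]
  tfae_have 2 → 3
  · exact fun h k => ⟨z₀, hz₀, fun z hz => le_of_eq (h k z hz z₀ hz₀)⟩
  tfae_have 2 → 4
  · intro h z hz w hw
    rw [show frobNorm (F z) = Real.sqrt (∑ k, sval (F z) k ^ 2) from SvalAux.frobNorm_eq _,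
      show frobNorm (F w) = Real.sqrt (∑ k, sval (F w) k ^ 2) from SvalAux.frobNorm_eq _]
    congr 1
    exact Finset.sum_congr rfl fun k _ => by rw [h k z hz w hw]
  tfae_have 4 → 5
  · exact fun h => ⟨z₀, hz₀, fun z hz => le_of_eq (h z hz z₀ hz₀)⟩
  tfae_have 5 → 1
  · rintro ⟨c, hc, hmax⟩ z hz w hw
    have hdiff : DifferentiableOn ℂ (fun z => SvalAux.ems (F z)) Ω :=
      fun x hx => (SvalAux.ems_diff F (hF x hx)).differentiableWithinAt
    have hmax' : IsMaxOn (norm ∘ fun z => SvalAux.ems (F z)) Ω c := by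
      intro x hx
      simpa only [Function.comp_apply, Set.mem_setOf_eq,
        ← SvalAux.frobNorm_eq_norm_ems] using hmax x hx
    have heq := Complex.eqOn_of_isPreconnected_of_isMaxOn_norm hconn.isPreconnected hΩ
      hdiff hc hmax'
    exact SvalAux.ems_inj ((heq hz).trans (heq hw).symm)
  tfae_have 3 → 2
  · intro h3
    have step : ∀ k : Fin n,
        (∀ j : Fin n, j < k → ∀ z ∈ Ω, ∀ w ∈ Ω, sval (F z) j = sval (F w) j) →
        ∀ z ∈ Ω, ∀ w ∈ Ω, sval (F z) k = sval (F w) k := by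
      intro k IH
      obtain ⟨zk, hzk, hmax⟩ := h3 k
      suffices hs : ∀ z ∈ Ω, sval (F z) k = sval (F zk) k by
        intro z hz w hw; rw [hs z hz, hs w hw]
      rcases le_or_gt (sval (F zk) k) 0 with hle | hpos
      · intro z hz
        have h1 := hmax z hz
        have h2 := SvalAux.sval_nonneg (F z) k
        have h3' := SvalAux.sval_nonneg (F zk) k
        linarith
      · obtain ⟨u, v, hu, hv, hsum⟩ := SvalAux.attain (F zk) k hpos
        set g : ℂ → ℂ := fun z => ∑ i, ⟪u i, SvalAux.TA (F z) (v i)⟫_ℂ with hg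
        have hgdiff : DifferentiableOn ℂ g Ω :=
          fun x hx => (SvalAux.phi_diff u v F (hF x hx)).differentiableWithinAt
        set C : ℝ := ∑ i ∈ Finset.Iio k, sval (F zk) i with hC
        have hCnon : 0 ≤ C :=
          Finset.sum_nonneg fun i _ => SvalAux.sval_nonneg _ _
        have hsplit : ∀ z ∈ Ω, ∑ i ∈ Finset.Iic k, sval (F z) i = C + sval (F z) k := by
          intro z hz
          rw [← Finset.Iio_insert, Finset.sum_insert (by simp)]
          have : ∑ i ∈ Finset.Iio k, sval (F z) i = ∑ i ∈ Finset.Iio k, sval (F zk) i :=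
            Finset.sum_congr rfl fun j hj => IH j (Finset.mem_Iio.mp hj) z hz zk hzk
          rw [this, hC]; ring
        have hbound : ∀ z ∈ Ω, ‖g z‖ ≤ C + sval (F z) k := by
          intro z hz
          rw [← hsplit z hz]
          exact SvalAux.kyfan (F z) k le_rfl u v hu hv
        have hgzk : ‖g zk‖ = C + sval (F zk) k := by
          rw [hg]
          simp only []
          rw [hsum, SvalAux.norm_real_coe _
            (Finset.sum_nonneg fun i _ => SvalAux.sval_nonneg _ _), hsplit zk hzk]
        have hmaxon : IsMaxOn (norm ∘ g) Ω zk := by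
          intro z hz
          have hb := hbound z hz
          have hm := hmax z hz
          simp only [Function.comp_apply, Set.mem_setOf_eq]
          rw [hgzk]
          linarith
        have heq := Complex.norm_eqOn_of_isPreconnected_of_isMaxOn hconn.isPreconnected hΩ
          hgdiff hzk hmaxon
        intro z hz
        have h1 : ‖g z‖ = ‖g zk‖ := heq hz
        have h2 := hbound z hz
        have h3'' := hmax z hz
        rw [hgzk] at h1
        linarith
    have all : ∀ m : ℕ, ∀ k : Fin n, k.1 < m → ∀ z ∈ Ω, ∀ w ∈ Ω,
        sval (F z) k = sval (F w) k := by
      intro m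
      induction m with
      | zero => intro k hk; omega
      | succ m ih =>
        intro k hk
        exact step k fun j hj => ih j (by have := Fin.lt_def.mp hj; omega)
    exact fun k => all (k.1 + 1) k (by omega)
  tfae_finish
end

section
/- Let 1 ≤ m ≤ n, let Ω be a region (nonempty open connected subset) of ℂ, and let F : Ω → M_n(ℂ) be analytic. Suppose that for each k = 1, …, m, the function z ↦ s_k(F(z)) attains its maximum value on Ω. Then for each k = 1, …, m, the function z ↦ s_k(F(z)) is constant on Ω. -/
open scoped Matrix

attribute [local instance] Matrix.normedAddCommGroup Matrix.normedSpace

section SVAuxSection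

open Matrix Finset Equiv Function

variable {n p : ℕ}

lemma det_mul_expand {α : Type} [Fintype α] [DecidableEq α]
    (P : Matrix (Fin p) α ℂ) (Q : Matrix α (Fin p) ℂ) :
    det (P * Q) = ∑ φ : Fin p → α, ∑ σ : Perm (Fin p),
      ((Equiv.Perm.sign σ : ℤ) : ℂ) * ∏ x, P (σ x) (φ x) * Q (φ x) x := by
  simp only [det_apply', mul_apply, prod_univ_sum, mul_sum, Fintype.piFinset_univ]
  rw [Finset.sum_comm]

lemma cb_aux {α : Type} [Fintype α] [DecidableEq α]
    (P : Matrix (Fin p) α ℂ) (Q : Matrix α (Fin p) ℂ) {φ : Fin p → α}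
    (H : ¬Function.Injective φ) :
    ∑ σ : Perm (Fin p), ((Equiv.Perm.sign σ : ℤ) : ℂ) * ∏ x, P (σ x) (φ x) * Q (φ x) x = 0 := by
  obtain ⟨i, j, hpij, hij⟩ : ∃ i j, φ i = φ j ∧ i ≠ j := by
    rw [Function.Injective] at H; push_neg at H; exact H
  exact Finset.sum_involution (fun σ _ => σ * Equiv.swap i j)
    (fun σ _ => by
      have : (∏ x, P (σ x) (φ x)) = ∏ x, P ((σ * Equiv.swap i j) x) (φ x) :=
        Fintype.prod_equiv (Equiv.swap i j) _ _ (by simp [Equiv.apply_swap_eq_self hpij])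
      simp [this, Equiv.Perm.sign_swap hij, prod_mul_distrib])
    (fun σ _ _ => (not_congr Equiv.mul_swap_eq_iff).mpr hij) (fun _ _ => mem_univ _)
    fun σ _ => Equiv.mul_swap_involutive i j σ

lemma image_orderEmbOfFin (S : Finset (Fin n)) (hS : S.card = p) :
    Finset.image (S.orderEmbOfFin hS) univ = S := by
  ext b
  simp only [Finset.mem_image, Finset.mem_univ, true_and]
  constructor
  · rintro ⟨a, rfl⟩; exact S.orderEmbOfFin_mem hS a
  · intro hb
    refine ⟨(S.orderIsoOfFin hS).symm ⟨b, hb⟩, ?_⟩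
    rw [← Finset.coe_orderIsoOfFin_apply, OrderIso.apply_symm_apply]

theorem cauchyBinet (M N : Matrix (Fin n) (Fin p) ℂ) :
    (Mᴴ * N).det = ∑ S : {S : Finset (Fin n) // S.card = p},
      star ((M.submatrix (S.1.orderEmbOfFin S.2) id).det) *
        (N.submatrix (S.1.orderEmbOfFin S.2) id).det := by
  classical
  set F : (Fin p → Fin n) → ℂ := fun φ => ∑ σ : Perm (Fin p),
    ((Equiv.Perm.sign σ : ℤ) : ℂ) * ∏ x, Mᴴ (σ x) (φ x) * N (φ x) x with hF
  have step1 : (Mᴴ * N).det = ∑ φ : Fin p → Fin n, F φ := det_mul_expand Mᴴ N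
  have step2 : ∑ φ : Fin p → Fin n, F φ
      = ∑ φ ∈ univ.filter (fun φ : Fin p → Fin n => Function.Injective φ), F φ := by
    refine (Finset.sum_subset (filter_subset _ _) fun φ _ hφ => ?_).symm
    simp only [hF]
    exact cb_aux Mᴴ N (by simpa using hφ)
  have step4 : ∀ (S : {S : Finset (Fin n) // S.card = p}),
      ∑ q ∈ univ.filter (fun q : Fin p → Fin p => Function.Injective q),
        F (⇑(S.1.orderEmbOfFin S.2) ∘ q)
      = star ((M.submatrix (S.1.orderEmbOfFin S.2) id).det) *
          (N.submatrix (S.1.orderEmbOfFin S.2) id).det := by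
    intro S
    have he : Function.Injective (S.1.orderEmbOfFin S.2) := (S.1.orderEmbOfFin S.2).injective
    have h1 : ∑ q ∈ univ.filter (fun q : Fin p → Fin p => Function.Injective q),
        F (⇑(S.1.orderEmbOfFin S.2) ∘ q) = ∑ q : Fin p → Fin p, F (⇑(S.1.orderEmbOfFin S.2) ∘ q) := by
      refine Finset.sum_subset (filter_subset _ _) fun q _ hq => ?_
      simp only [hF]
      refine cb_aux Mᴴ N (φ := (S.1.orderEmbOfFin S.2) ∘ q) fun hinj => ?_
      simp only [Finset.mem_filter, Finset.mem_univ, true_and] at hq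
      exact hq fun a b hab => hinj (by simp only [Function.comp_apply, hab])
    rw [h1, ← det_conjTranspose, ← det_mul, det_mul_expand]
    simp only [hF]
    rfl
  have step3 : ∑ φ ∈ univ.filter (fun φ : Fin p → Fin n => Function.Injective φ), F φ
      = ∑ S : {S : Finset (Fin n) // S.card = p},
          ∑ q ∈ univ.filter (fun q : Fin p → Fin p => Function.Injective q),
            F (⇑(S.1.orderEmbOfFin S.2) ∘ q) := by
    have hbij : ∑ x ∈ (univ : Finset {S : Finset (Fin n) // S.card = p}) ×ˢ
          (univ.filter (fun q : Fin p → Fin p => Function.Injective q)),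
          F ((x.1.1.orderEmbOfFin x.1.2) ∘ x.2)
        = ∑ φ ∈ univ.filter (fun φ : Fin p → Fin n => Function.Injective φ), F φ := by
      refine Finset.sum_bij (fun x _ => (x.1.1.orderEmbOfFin x.1.2) ∘ x.2) ?_ ?_ ?_ ?_
      · rintro ⟨S, q⟩ hx
        simp only [Finset.mem_product, Finset.mem_filter, Finset.mem_univ, true_and] at hx ⊢
        exact ((S.1.orderEmbOfFin S.2).injective).comp hx
      · rintro ⟨S, q⟩ hx ⟨S', q'⟩ hx' heq
        simp only [Finset.mem_product, Finset.mem_filter, Finset.mem_univ, true_and] at hx hx'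
        have himg : S.1 = S'.1 := by
          have h1 := congrArg (fun f => Finset.image f (univ : Finset (Fin p))) heq
          simp only [← Finset.image_image] at h1
          rwa [Finset.image_univ_of_surjective (Finite.injective_iff_surjective.mp hx),
            Finset.image_univ_of_surjective (Finite.injective_iff_surjective.mp hx'),
            image_orderEmbOfFin _ S.2, image_orderEmbOfFin _ S'.2] at h1
        have hSS : S = S' := Subtype.ext himg
        subst hSS
        have hq : q = q' := by
          funext a
          exact (S.1.orderEmbOfFin S.2).injective (congrFun heq a)
        rw [hq]
      · rintro φ hφ
        simp only [Finset.mem_filter, Finset.mem_univ, true_and] at hφ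
        have hcard : (Finset.image φ univ).card = p := by
          rw [Finset.card_image_of_injective _ hφ, Finset.card_univ, Fintype.card_fin]
        refine ⟨(⟨⟨Finset.image φ univ, hcard⟩,
          fun a => ((Finset.image φ univ).orderIsoOfFin hcard).symm
            ⟨φ a, Finset.mem_image.mpr ⟨a, mem_univ a, rfl⟩⟩⟩ :
              {S : Finset (Fin n) // S.card = p} × (Fin p → Fin p)), ?_, ?_⟩
        · simp only [Finset.mem_product, Finset.mem_filter, Finset.mem_univ, true_and]
          intro a b hab
          have h2 := ((Finset.image φ univ).orderIsoOfFin hcard).symm.injective hab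
          exact hφ (congrArg Subtype.val h2)
        · funext a
          simp only [Function.comp_apply]
          rw [← Finset.coe_orderIsoOfFin_apply, OrderIso.apply_symm_apply]
      · rintro ⟨S, q⟩ hx; rfl
    rw [← hbij, Finset.sum_product]
  rw [step1, step2, step3]
  exact Finset.sum_congr rfl fun S _ => step4 S

namespace SVAux

variable {N : ℕ}

noncomputable def svf {N : ℕ} (A : Matrix (Fin N) (Fin N) ℂ) : Fin N → ℝ :=
  fun i => Real.sqrt ((Matrix.isHermitian_conjTranspose_mul_self A).eigenvalues i)

lemma eig_nonneg (A : Matrix (Fin N) (Fin N) ℂ) (i : Fin N) :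
    0 ≤ (Matrix.isHermitian_conjTranspose_mul_self A).eigenvalues i :=
  Matrix.eigenvalues_conjTranspose_mul_self_nonneg A i

lemma sval_def (A : Matrix (Fin N) (Fin N) ℂ) (k : Fin N) :
    sval A k = svf A (Tuple.sort (svf A) k.rev) := rfl

lemma sval_nonneg (A : Matrix (Fin N) (Fin N) ℂ) (k : Fin N) : 0 ≤ sval A k :=
  Real.sqrt_nonneg _

lemma sval_antitone (A : Matrix (Fin N) (Fin N) ℂ) {j k : Fin N} (h : j ≤ k) :
    sval A k ≤ sval A j :=
  Tuple.monotone_sort (svf A) (Fin.rev_le_rev.mpr h)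

lemma sval_sq (A : Matrix (Fin N) (Fin N) ℂ) (k : Fin N) :
    sval A k ^ 2 = (Matrix.isHermitian_conjTranspose_mul_self A).eigenvalues
      (Tuple.sort (svf A) k.rev) :=
  Real.sq_sqrt (eig_nonneg A _)

lemma strictMono_val_le {p n : ℕ} (h : Fin p → Fin n) (hm : StrictMono h) (a : Fin p) :
    (a : ℕ) ≤ (h a : ℕ) := by
  suffices H : ∀ t : ℕ, ∀ a : Fin p, a.val = t → t ≤ (h a).val from H a.val a rfl
  intro t
  induction t with
  | zero => intro a _; omega
  | succ s ih =>
    intro a ha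
    have hs : s < p := by omega
    have h1 := ih ⟨s, hs⟩ rfl
    have hlt : h ⟨s, hs⟩ < h a := hm (by simp [Fin.lt_def, ha])
    rw [Fin.lt_def] at hlt
    omega

lemma strictMono_val_ge {p n : ℕ} (hp : p ≤ n) (h : Fin p → Fin n) (hm : StrictMono h)
    (a : Fin p) : (h a : ℕ) ≤ n - p + a := by
  have hu : StrictMono (fun b : Fin p => (h b.rev).rev) := by
    intro b b' hbb
    exact Fin.rev_lt_rev.mpr (hm (Fin.rev_lt_rev.mpr hbb))
  have h1 := strictMono_val_le _ hu a.rev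
  simp only [Fin.rev_rev, Fin.val_rev] at h1
  have h2 := a.isLt; have h3 := (h a).isLt
  omega

lemma prod_le_prod_top {n p : ℕ} (hp : p ≤ n) (w : Fin n → ℝ) (hw : Monotone w)
    (h0 : ∀ i, 0 ≤ w i) (T : Finset (Fin n)) (hT : T.card = p) :
    ∏ a : Fin p, w (T.orderEmbOfFin hT a) ≤ ∏ a : Fin p, w ((Fin.castLE hp a.rev).rev) := by
  refine Finset.prod_le_prod (fun a _ => h0 _) (fun a _ => hw ?_)
  rw [Fin.le_def]
  have h1 := strictMono_val_ge hp _ (T.orderEmbOfFin hT).strictMono a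
  have h2 := a.isLt
  have h3 := (Fin.castLE hp a.rev).isLt
  simp only [Fin.val_rev, Fin.coe_castLE] at *
  omega

end SVAux

namespace SVAux

lemma star_mul_self_complex (z : ℂ) : star z * z = ((‖z‖ ^ 2 : ℝ) : ℂ) := by
  rw [Complex.star_def, mul_comm, Complex.mul_conj]
  norm_cast
  simp [Complex.normSq_eq_norm_sq]

lemma prod_fin_eq_prod_set {n p : ℕ} (w : Fin n → ℝ) (S : Finset (Fin n)) (hS : S.card = p) :
    ∏ a : Fin p, w (S.orderEmbOfFin hS a) = ∏ i ∈ S, w i := by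
  conv_rhs => rw [← image_orderEmbOfFin S hS]
  rw [Finset.prod_image (fun a _ b _ hab => (S.orderEmbOfFin hS).injective hab)]

lemma eig_sort_monotone {n : ℕ} (A : Matrix (Fin n) (Fin n) ℂ) :
    Monotone (fun t => (Matrix.isHermitian_conjTranspose_mul_self A).eigenvalues
      (Tuple.sort (svf A) t)) := by
  intro a b hab
  have h1 : (svf A ∘ Tuple.sort (svf A)) a ≤ (svf A ∘ Tuple.sort (svf A)) b :=
    Tuple.monotone_sort (svf A) hab
  calc (Matrix.isHermitian_conjTranspose_mul_self A).eigenvalues (Tuple.sort (svf A) a)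
      = (svf A (Tuple.sort (svf A) a)) ^ 2 := (Real.sq_sqrt (eig_nonneg A _)).symm
    _ ≤ (svf A (Tuple.sort (svf A) b)) ^ 2 := pow_le_pow_left₀ (Real.sqrt_nonneg _) h1 2
    _ = (Matrix.isHermitian_conjTranspose_mul_self A).eigenvalues (Tuple.sort (svf A) b) :=
        Real.sq_sqrt (eig_nonneg A _)

lemma prod_eig_le {n p : ℕ} (hp : p ≤ n) (A : Matrix (Fin n) (Fin n) ℂ)
    (S : Finset (Fin n)) (hS : S.card = p) :
    ∏ a : Fin p, (Matrix.isHermitian_conjTranspose_mul_self A).eigenvalues (S.orderEmbOfFin hS a)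
      ≤ ∏ j : Fin p, (sval A (Fin.castLE hp j)) ^ 2 := by
  classical
  have h1 := prod_fin_eq_prod_set
    ((Matrix.isHermitian_conjTranspose_mul_self A).eigenvalues) S hS
  have hTcard : (S.image (Tuple.sort (svf A)).symm).card = p := by
    rw [Finset.card_image_of_injective _ (Tuple.sort (svf A)).symm.injective, hS]
  have h2 : ∏ i ∈ S, (Matrix.isHermitian_conjTranspose_mul_self A).eigenvalues i
      = ∏ t ∈ S.image (Tuple.sort (svf A)).symm,
        (Matrix.isHermitian_conjTranspose_mul_self A).eigenvalues (Tuple.sort (svf A) t) := by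
    rw [Finset.prod_image (fun a _ b _ hab => (Tuple.sort (svf A)).symm.injective hab)]
    exact Finset.prod_congr rfl fun i _ => by rw [Equiv.apply_symm_apply]
  have h3 := (prod_fin_eq_prod_set
    (fun t => (Matrix.isHermitian_conjTranspose_mul_self A).eigenvalues (Tuple.sort (svf A) t))
    (S.image (Tuple.sort (svf A)).symm) hTcard).symm
  have h4 := prod_le_prod_top hp
    (fun t => (Matrix.isHermitian_conjTranspose_mul_self A).eigenvalues (Tuple.sort (svf A) t))
    (eig_sort_monotone A) (fun t => eig_nonneg A _)
    (S.image (Tuple.sort (svf A)).symm) hTcard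
  have h5 : ∏ a : Fin p, (Matrix.isHermitian_conjTranspose_mul_self A).eigenvalues
        (Tuple.sort (svf A) ((Fin.castLE hp a.rev).rev))
      = ∏ j : Fin p, (sval A (Fin.castLE hp j)) ^ 2 := by
    refine Fintype.prod_equiv Fin.revPerm _ _ fun x => ?_
    rw [sval_sq]
    rfl
  rw [h1, h2, h3]
  exact h4.trans (le_of_eq h5)

end SVAux

namespace SVAux

open Matrix

lemma gram_det_eq {n p : ℕ} (M : Matrix (Fin n) (Fin p) ℂ) :
    (Mᴴ * M).det = ((∑ S : {S : Finset (Fin n) // S.card = p},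
      ‖(M.submatrix (S.1.orderEmbOfFin S.2) id).det‖ ^ 2 : ℝ) : ℂ) := by
  rw [cauchyBinet M M, Complex.ofReal_sum]
  exact Finset.sum_congr rfl fun S _ => star_mul_self_complex _

lemma diag_mul_submatrix {n p : ℕ} (c : Fin n → ℂ) (Z : Matrix (Fin n) (Fin p) ℂ)
    (e : Fin p → Fin n) (he : Function.Injective e) :
    (Matrix.diagonal c * Z).submatrix e id
      = Matrix.diagonal (c ∘ e) * Z.submatrix e id := by
  ext a b
  simp [Matrix.submatrix_apply, Matrix.diagonal_mul]

theorem lemA {n p : ℕ} (hp : p ≤ n) (A : Matrix (Fin n) (Fin n) ℂ)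
    (X Y : Matrix (Fin n) (Fin p) ℂ) (hX : Xᴴ * X = 1) (hY : Yᴴ * Y = 1) :
    ‖(Xᴴ * A * Y).det‖ ≤ ∏ j : Fin p, sval A (Fin.castLE hp j) := by
  classical
  have hprod_nonneg : 0 ≤ ∏ j : Fin p, sval A (Fin.castLE hp j) :=
    Finset.prod_nonneg fun j _ => sval_nonneg A _
  have hH := Matrix.isHermitian_conjTranspose_mul_self A
  set V : Matrix (Fin n) (Fin n) ℂ := (hH.eigenvectorUnitary : Matrix (Fin n) (Fin n) ℂ) with hVdef
  have hVV : V * Vᴴ = 1 := by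
    rw [← Matrix.star_eq_conjTranspose]
    exact (Matrix.mem_unitaryGroup_iff).mp hH.eigenvectorUnitary.2
  have hVV' : Vᴴ * V = 1 := by
    rw [← Matrix.star_eq_conjTranspose]
    exact (Matrix.mem_unitaryGroup_iff').mp hH.eigenvectorUnitary.2
  set c : Fin n → ℂ := fun i => ((Real.sqrt (hH.eigenvalues i) : ℝ) : ℂ) with hc
  set W : Matrix (Fin n) (Fin n) ℂ := Matrix.diagonal c * Vᴴ with hWdef
  have hWW : Wᴴ * W = Aᴴ * A := by
    rw [hWdef, Matrix.conjTranspose_mul, Matrix.conjTranspose_conjTranspose,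
      Matrix.diagonal_conjTranspose]
    have h1 : star c = c := funext fun i => by
      simp [hc, Pi.star_apply, Complex.star_def, Complex.conj_ofReal]
    rw [h1, Matrix.mul_assoc, ← Matrix.mul_assoc (Matrix.diagonal c),
      Matrix.diagonal_mul_diagonal]
    have h2 : (fun i => c i * c i) = fun i => ((hH.eigenvalues i : ℝ) : ℂ) := funext fun i => by
      show ((Real.sqrt (hH.eigenvalues i) : ℝ) : ℂ) * ((Real.sqrt (hH.eigenvalues i) : ℝ) : ℂ)
        = ((hH.eigenvalues i : ℝ) : ℂ)
      rw [← Complex.ofReal_mul, Real.mul_self_sqrt (eig_nonneg A i)]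
    rw [h2, ← Matrix.mul_assoc]
    conv_rhs => rw [hH.spectral_theorem]
    rw [Unitary.conjStarAlgAut_apply, Matrix.star_eq_conjTranspose]
    rfl
  -- sum identities
  have hXsum : ∑ S : {S : Finset (Fin n) // S.card = p},
      ‖(X.submatrix (S.1.orderEmbOfFin S.2) id).det‖ ^ 2 = 1 := by
    have h := gram_det_eq X
    rw [hX, Matrix.det_one] at h
    exact_mod_cast h.symm
  have hAY : (A * Y)ᴴ * (A * Y) = Yᴴ * (Aᴴ * A) * Y := by
    rw [Matrix.conjTranspose_mul]
    simp only [Matrix.mul_assoc]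
  have hWY : (W * Y)ᴴ * (W * Y) = Yᴴ * (Aᴴ * A) * Y := by
    rw [Matrix.conjTranspose_mul, Matrix.mul_assoc, ← Matrix.mul_assoc Wᴴ W Y, hWW]
    simp only [Matrix.mul_assoc]
  have hsum_eq : ∑ S : {S : Finset (Fin n) // S.card = p},
        ‖((A * Y).submatrix (S.1.orderEmbOfFin S.2) id).det‖ ^ 2
      = ∑ S : {S : Finset (Fin n) // S.card = p},
        ‖((W * Y).submatrix (S.1.orderEmbOfFin S.2) id).det‖ ^ 2 := by
    have h1 := gram_det_eq (A * Y)
    have h2 := gram_det_eq (W * Y)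
    rw [hAY] at h1
    rw [hWY] at h2
    exact_mod_cast h1.symm.trans h2
  have hZone : (Vᴴ * Y)ᴴ * (Vᴴ * Y) = 1 := by
    rw [Matrix.conjTranspose_mul, Matrix.conjTranspose_conjTranspose, Matrix.mul_assoc,
      ← Matrix.mul_assoc V, hVV, Matrix.one_mul, hY]
  have hZsum : ∑ S : {S : Finset (Fin n) // S.card = p},
      ‖((Vᴴ * Y).submatrix (S.1.orderEmbOfFin S.2) id).det‖ ^ 2 = 1 := by
    have h := gram_det_eq (Vᴴ * Y)
    rw [hZone, Matrix.det_one] at h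
    exact_mod_cast h.symm
  have hterm : ∀ S : {S : Finset (Fin n) // S.card = p},
      ‖((W * Y).submatrix (S.1.orderEmbOfFin S.2) id).det‖ ^ 2
      = (∏ a : Fin p, hH.eigenvalues (S.1.orderEmbOfFin S.2 a)) *
        ‖((Vᴴ * Y).submatrix (S.1.orderEmbOfFin S.2) id).det‖ ^ 2 := by
    intro S
    have h1 : W * Y = Matrix.diagonal c * (Vᴴ * Y) := by rw [hWdef, Matrix.mul_assoc]
    rw [h1, diag_mul_submatrix c _ _ (S.1.orderEmbOfFin S.2).injective, Matrix.det_mul,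
      Matrix.det_diagonal, norm_mul, mul_pow, norm_prod]
    congr 1
    rw [← Finset.prod_pow]
    refine Finset.prod_congr rfl fun a _ => ?_
    simp only [Function.comp_apply, hc, Complex.norm_real]
    rw [Real.norm_eq_abs, abs_of_nonneg (Real.sqrt_nonneg _)]
    exact Real.sq_sqrt (eig_nonneg A _)
  have hbound : ∑ S : {S : Finset (Fin n) // S.card = p},
        ‖((A * Y).submatrix (S.1.orderEmbOfFin S.2) id).det‖ ^ 2
      ≤ ∏ j : Fin p, (sval A (Fin.castLE hp j)) ^ 2 := by
    rw [hsum_eq]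
    calc ∑ S : {S : Finset (Fin n) // S.card = p},
          ‖((W * Y).submatrix (S.1.orderEmbOfFin S.2) id).det‖ ^ 2
        = ∑ S : {S : Finset (Fin n) // S.card = p},
          (∏ a : Fin p, hH.eigenvalues (S.1.orderEmbOfFin S.2 a)) *
            ‖((Vᴴ * Y).submatrix (S.1.orderEmbOfFin S.2) id).det‖ ^ 2 :=
        Finset.sum_congr rfl fun S _ => hterm S
      _ ≤ ∑ S : {S : Finset (Fin n) // S.card = p},
          (∏ j : Fin p, (sval A (Fin.castLE hp j)) ^ 2) *
            ‖((Vᴴ * Y).submatrix (S.1.orderEmbOfFin S.2) id).det‖ ^ 2 :=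
        Finset.sum_le_sum fun S _ => mul_le_mul_of_nonneg_right
          (prod_eig_le hp A S.1 S.2) (by positivity)
      _ = (∏ j : Fin p, (sval A (Fin.castLE hp j)) ^ 2) * ∑ S : {S : Finset (Fin n) // S.card = p},
            ‖((Vᴴ * Y).submatrix (S.1.orderEmbOfFin S.2) id).det‖ ^ 2 := by
        rw [← Finset.mul_sum]
      _ = ∏ j : Fin p, (sval A (Fin.castLE hp j)) ^ 2 := by rw [hZsum, mul_one]
  have hCS : ‖(Xᴴ * A * Y).det‖ ≤ Real.sqrt (∑ S : {S : Finset (Fin n) // S.card = p},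
      ‖((A * Y).submatrix (S.1.orderEmbOfFin S.2) id).det‖ ^ 2) := by
    rw [Matrix.mul_assoc, cauchyBinet X (A * Y)]
    calc ‖∑ S : {S : Finset (Fin n) // S.card = p},
          star ((X.submatrix (S.1.orderEmbOfFin S.2) id).det) *
            ((A * Y).submatrix (S.1.orderEmbOfFin S.2) id).det‖
        ≤ ∑ S : {S : Finset (Fin n) // S.card = p},
          ‖(X.submatrix (S.1.orderEmbOfFin S.2) id).det‖ *
            ‖((A * Y).submatrix (S.1.orderEmbOfFin S.2) id).det‖ := by
          refine (norm_sum_le _ _).trans (le_of_eq ?_)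
          exact Finset.sum_congr rfl fun S _ => by rw [norm_mul, norm_star]
      _ ≤ Real.sqrt (∑ S : {S : Finset (Fin n) // S.card = p},
            ‖(X.submatrix (S.1.orderEmbOfFin S.2) id).det‖ ^ 2) *
          Real.sqrt (∑ S : {S : Finset (Fin n) // S.card = p},
            ‖((A * Y).submatrix (S.1.orderEmbOfFin S.2) id).det‖ ^ 2) :=
          Real.sum_mul_le_sqrt_mul_sqrt _ _ _
      _ = Real.sqrt (∑ S : {S : Finset (Fin n) // S.card = p},
            ‖((A * Y).submatrix (S.1.orderEmbOfFin S.2) id).det‖ ^ 2) := by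
          rw [hXsum, Real.sqrt_one, one_mul]
  refine hCS.trans ?_
  have h := Real.sqrt_le_sqrt hbound
  rwa [Finset.prod_pow, Real.sqrt_sq hprod_nonneg] at h

end SVAux

namespace SVAux

theorem lemB {n p : ℕ} (hp : p ≤ n) (A : Matrix (Fin n) (Fin n) ℂ)
    (hpos : ∀ j : Fin p, 0 < sval A (Fin.castLE hp j)) :
    ∃ X Y : Matrix (Fin n) (Fin p) ℂ, Xᴴ * X = 1 ∧ Yᴴ * Y = 1 ∧
      (Xᴴ * A * Y).det = ((∏ j : Fin p, sval A (Fin.castLE hp j) : ℝ) : ℂ) := by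
  classical
  have hH := Matrix.isHermitian_conjTranspose_mul_self A
  set m : Fin p → Fin n := fun j => Tuple.sort (svf A) ((Fin.castLE hp j).rev) with hm
  have hminj : Function.Injective m := by
    intro a b hab
    have h1 := (Tuple.sort (svf A)).injective hab
    have h2 : (Fin.castLE hp a) = (Fin.castLE hp b) := Fin.rev_inj.mp h1
    exact Fin.castLE_injective hp h2
  set v : Fin p → (Fin n → ℂ) := fun j => ⇑(hH.eigenvectorBasis (m j)) with hv
  have K1 : ∀ a b : Fin n, (∑ i, star (⇑(hH.eigenvectorBasis a) i) * ⇑(hH.eigenvectorBasis b) i)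
      = if a = b then (1 : ℂ) else 0 := by
    intro a b
    have h := hH.eigenvectorBasis.orthonormal
    rw [orthonormal_iff_ite] at h
    have h2 := h a b
    rw [PiLp.inner_apply] at h2
    simpa [RCLike.inner_apply, Complex.star_def, mul_comm] using h2
  have hsq : ∀ j : Fin p, ((sval A (Fin.castLE hp j)) : ℝ) ^ 2 = hH.eigenvalues (m j) :=
    fun j => sval_sq A (Fin.castLE hp j)
  have K3 : ∀ a b : Fin p, (∑ i, star ((A *ᵥ v a) i) * ((A *ᵥ v b) i))
      = if a = b then ((hH.eigenvalues (m b) : ℝ) : ℂ) else 0 := by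
    intro a b
    have h1 : (∑ i, star ((A *ᵥ v a) i) * ((A *ᵥ v b) i))
        = dotProduct (star (A *ᵥ v a)) (A *ᵥ v b) := by
      simp [dotProduct, Pi.star_apply]
    rw [h1, Matrix.star_mulVec, ← Matrix.dotProduct_mulVec, Matrix.mulVec_mulVec]
    rw [show (Aᴴ * A) *ᵥ (v b) = hH.eigenvalues (m b) • (v b) from hH.mulVec_eigenvectorBasis (m b)]
    rw [dotProduct_smul]
    have h2 : dotProduct (star (v a)) (v b) = if a = b then (1 : ℂ) else 0 := by
      have := K1 (m a) (m b)
      rw [show (if m a = m b then (1:ℂ) else 0) = if a = b then (1:ℂ) else 0 by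
        by_cases hab : a = b
        · simp [hab]
        · rw [if_neg hab, if_neg (fun h => hab (hminj h))]] at this
      simpa [dotProduct, hv] using this
    rw [h2]
    by_cases hab : a = b <;> simp [hab, Complex.real_smul]
  -- the matrices
  set s : Fin p → ℝ := fun j => sval A (Fin.castLE hp j) with hs
  set Y : Matrix (Fin n) (Fin p) ℂ := Matrix.of (fun i j => v j i) with hY
  set X : Matrix (Fin n) (Fin p) ℂ :=
    Matrix.of (fun i j => ((s j : ℝ) : ℂ)⁻¹ * (A *ᵥ v j) i) with hX
  have hsne : ∀ j, ((s j : ℝ) : ℂ) ≠ 0 := fun j => by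
    exact_mod_cast ne_of_gt (hpos j)
  have hYY : Yᴴ * Y = 1 := by
    ext a b
    simp only [Matrix.mul_apply, Matrix.conjTranspose_apply, hY, Matrix.of_apply,
      Matrix.one_apply]
    have := K1 (m a) (m b)
    rw [show (if m a = m b then (1:ℂ) else 0) = if a = b then (1:ℂ) else 0 by
      by_cases hab : a = b
      · simp [hab]
      · rw [if_neg hab, if_neg (fun h => hab (hminj h))]] at this
    simpa [hv] using this
  have hXX : Xᴴ * X = 1 := by
    ext a b
    simp only [Matrix.mul_apply, Matrix.conjTranspose_apply, hX, Matrix.of_apply,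
      Matrix.one_apply]
    have h1 : ∀ i : Fin n, star (((s a : ℝ) : ℂ)⁻¹ * (A *ᵥ v a) i)
        * (((s b : ℝ) : ℂ)⁻¹ * (A *ᵥ v b) i)
        = ((s a : ℝ) : ℂ)⁻¹ * ((s b : ℝ) : ℂ)⁻¹
          * (star ((A *ᵥ v a) i) * ((A *ᵥ v b) i)) := by
      intro i
      rw [star_mul']
      rw [star_inv₀, Complex.star_def, Complex.conj_ofReal]
      ring
    simp only [h1, ← Finset.mul_sum]
    rw [K3 a b]
    by_cases hab : a = b
    · subst hab
      rw [if_pos rfl, if_pos rfl, ← hsq a]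
      have := hsne a
      push_cast
      field_simp
      ring
    · rw [if_neg hab, if_neg hab, mul_zero]
  have hDET : Xᴴ * A * Y = Matrix.diagonal (fun j => ((s j : ℝ) : ℂ)) := by
    have hAY : A * Y = Matrix.of (fun i b => (A *ᵥ v b) i) := by
      ext i b
      simp [hY, Matrix.mul_apply, Matrix.mulVec, dotProduct]
    rw [Matrix.mul_assoc, hAY]
    ext a b
    simp only [Matrix.mul_apply, Matrix.conjTranspose_apply, hX, Matrix.of_apply,
      Matrix.diagonal_apply]
    have h1 : ∀ i : Fin n, star (((s a : ℝ) : ℂ)⁻¹ * (A *ᵥ v a) i) * (A *ᵥ v b) i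
        = ((s a : ℝ) : ℂ)⁻¹ * (star ((A *ᵥ v a) i) * ((A *ᵥ v b) i)) := by
      intro i
      rw [star_mul']
      rw [star_inv₀, Complex.star_def, Complex.conj_ofReal]
      ring
    simp only [h1, ← Finset.mul_sum]
    rw [K3 a b]
    by_cases hab : a = b
    · subst hab
      rw [if_pos rfl, if_pos rfl, ← hsq a]
      have := hsne a
      push_cast
      field_simp
      ring
    · rw [if_neg hab, if_neg hab, mul_zero]
  refine ⟨X, Y, hXX, hYY, ?_⟩
  rw [hDET, Matrix.det_diagonal]
  push_cast
  rfl

end SVAux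



namespace SVAux

lemma gdiff {n p : ℕ} (F : ℂ → Matrix (Fin n) (Fin n) ℂ) {z : ℂ}
    (hF : DifferentiableAt ℂ F z) (X Y : Matrix (Fin n) (Fin p) ℂ) :
    DifferentiableAt ℂ (fun w => (Xᴴ * F w * Y).det) z := by
  classical
  have hentry : ∀ i j : Fin n, DifferentiableAt ℂ (fun w => F w i j) z := by
    intro i j
    have hlin : IsBoundedLinearMap ℂ (fun M : Matrix (Fin n) (Fin n) ℂ => M i j) := by
      refine ⟨⟨fun M N => rfl, fun c M => rfl⟩, 1, one_pos, fun M => ?_⟩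
      simpa using Matrix.norm_entry_le_entrywise_sup_norm M (i := i) (j := j)
    have hd := (hlin.differentiableAt (x := F z)).comp z hF
    simpa [Function.comp_def] using hd
  have hmid : ∀ a b : Fin p, DifferentiableAt ℂ (fun w => (Xᴴ * F w * Y) a b) z := by
    intro a b
    have h1 : (fun w => (Xᴴ * F w * Y) a b)
        = fun w => ∑ j, (∑ i, Xᴴ a i * F w i j) * Y j b := by
      funext w
      simp [Matrix.mul_apply]
    rw [h1]
    exact DifferentiableAt.fun_sum fun j _ =>
      (DifferentiableAt.fun_sum fun i _ => (hentry i j).const_mul _).mul_const _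
  have h2 : (fun w => (Xᴴ * F w * Y).det)
      = fun w => ∑ σ : Equiv.Perm (Fin p), ((Equiv.Perm.sign σ : ℤ) : ℂ)
          * ∏ a, (Xᴴ * F w * Y) (σ a) a := by
    funext w
    rw [Matrix.det_apply']
  rw [h2]
  exact DifferentiableAt.fun_sum fun σ _ =>
    (DifferentiableAt.fun_finsetProd fun a _ => hmid (σ a) a).const_mul _

end SVAux


end SVAuxSection

/-- If `F` is analytic on a region `Ω`, `1 ≤ m ≤ n`, and for each `k = 1, …, m` the function
`z ↦ s_k(F z)` attains its maximum value on `Ω`, then each `z ↦ s_k(F z)`, `k = 1, …, m`, is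
constant on `Ω`.  (Here `k = 1, …, m` corresponds to indices `k : Fin n` with `(k : ℕ) < m`.) -/
theorem max_singular_values_constant {n m : ℕ} (hm : 1 ≤ m) (hmn : m ≤ n)
    (Ω : Set ℂ) (hΩ : IsOpen Ω) (hconn : IsConnected Ω)
    (F : ℂ → Matrix (Fin n) (Fin n) ℂ) (hF : ∀ z ∈ Ω, DifferentiableAt ℂ F z)
    (hmax : ∀ k : Fin n, (k : ℕ) < m → ∃ zk ∈ Ω, ∀ z ∈ Ω, sval (F z) k ≤ sval (F zk) k) :
    ∀ k : Fin n, (k : ℕ) < m → ∀ z ∈ Ω, ∀ w ∈ Ω, sval (F z) k = sval (F w) k := by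
  classical
  have core : ∀ k : Fin n, (k : ℕ) < m →
      (∀ j : Fin n, j < k → ∀ z ∈ Ω, ∀ w ∈ Ω, sval (F z) j = sval (F w) j) →
      ∀ z ∈ Ω, ∀ w ∈ Ω, sval (F z) k = sval (F w) k := by
    intro k hk IH
    obtain ⟨z₀, hz₀, hmax₀⟩ := hmax k hk
    rcases eq_or_lt_of_le (SVAux.sval_nonneg (F z₀) k) with h0 | hpos0
    · intro z hz w hw
      have hz' : sval (F z) k = 0 :=
        le_antisymm ((hmax₀ z hz).trans h0.symm.le) (SVAux.sval_nonneg _ _)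
      have hw' : sval (F w) k = 0 :=
        le_antisymm ((hmax₀ w hw).trans h0.symm.le) (SVAux.sval_nonneg _ _)
      rw [hz', hw']
    · have hp : (k : ℕ) + 1 ≤ n := k.isLt
      have hklast : Fin.castLE hp (Fin.last (k : ℕ)) = k := by
        ext; simp
      have hcast_le : ∀ j : Fin ((k : ℕ) + 1), Fin.castLE hp j ≤ k := by
        intro j
        rw [Fin.le_def]
        simpa using Nat.lt_succ_iff.mp j.isLt
      have hpos : ∀ j : Fin ((k : ℕ) + 1), 0 < sval (F z₀) (Fin.castLE hp j) :=
        fun j => lt_of_lt_of_le hpos0 (SVAux.sval_antitone (F z₀) (hcast_le j))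
      obtain ⟨X, Y, hX, hY, hdet⟩ := SVAux.lemB hp (F z₀) hpos
      have hgP : ∀ z, ‖(Xᴴ * F z * Y).det‖
          ≤ ∏ j : Fin ((k : ℕ) + 1), sval (F z) (Fin.castLE hp j) :=
        fun z => SVAux.lemA hp (F z) X Y hX hY
      have hg0 : ‖(Xᴴ * F z₀ * Y).det‖
          = ∏ j : Fin ((k : ℕ) + 1), sval (F z₀) (Fin.castLE hp j) := by
        rw [hdet, Complex.norm_real, Real.norm_eq_abs,
          abs_of_nonneg (Finset.prod_nonneg fun j _ => SVAux.sval_nonneg _ _)]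
      have hPle : ∀ z ∈ Ω, ∏ j : Fin ((k : ℕ) + 1), sval (F z) (Fin.castLE hp j)
          ≤ ∏ j : Fin ((k : ℕ) + 1), sval (F z₀) (Fin.castLE hp j) := by
        intro z hz
        refine Finset.prod_le_prod (fun j _ => SVAux.sval_nonneg _ _) (fun j _ => ?_)
        by_cases hj : Fin.castLE hp j = k
        · rw [hj]
          exact hmax₀ z hz
        · exact le_of_eq (IH _ (lt_of_le_of_ne (hcast_le j) hj) z hz z₀ hz₀)
      have hmaxg : IsMaxOn (norm ∘ fun z => (Xᴴ * F z * Y).det) Ω z₀ := by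
        refine isMaxOn_iff.mpr fun z hz => ?_
        calc ‖(Xᴴ * F z * Y).det‖ ≤ _ := hgP z
          _ ≤ _ := hPle z hz
          _ = _ := hg0.symm
      have hdiff : DifferentiableOn ℂ (fun z => (Xᴴ * F z * Y).det) Ω :=
        fun z hz => (SVAux.gdiff F (hF z hz) X Y).differentiableWithinAt
      have heq := Complex.norm_eqOn_of_isPreconnected_of_isMaxOn hconn.isPreconnected hΩ
        hdiff hz₀ hmaxg
      have hPconst : ∀ z ∈ Ω, ∏ j : Fin ((k : ℕ) + 1), sval (F z) (Fin.castLE hp j)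
          = ∏ j : Fin ((k : ℕ) + 1), sval (F z₀) (Fin.castLE hp j) := by
        intro z hz
        have h1 : ‖(Xᴴ * F z * Y).det‖ = ‖(Xᴴ * F z₀ * Y).det‖ := heq hz
        have h2 := hgP z
        have h3 := hPle z hz
        rw [h1, hg0] at h2
        linarith
      have hsplit : ∀ z, ∏ j : Fin ((k : ℕ) + 1), sval (F z) (Fin.castLE hp j)
          = sval (F z) k * ∏ j ∈ Finset.univ.erase (Fin.last (k : ℕ)),
              sval (F z) (Fin.castLE hp j) := by
        intro z
        rw [← Finset.mul_prod_erase Finset.univ _ (Finset.mem_univ (Fin.last (k : ℕ))), hklast]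
      have hC : ∀ z ∈ Ω, ∏ j ∈ Finset.univ.erase (Fin.last (k : ℕ)),
            sval (F z) (Fin.castLE hp j)
          = ∏ j ∈ Finset.univ.erase (Fin.last (k : ℕ)), sval (F z₀) (Fin.castLE hp j) := by
        intro z hz
        refine Finset.prod_congr rfl fun j hj => ?_
        have hjne : j ≠ Fin.last _ := (Finset.mem_erase.mp hj).1
        have hjk : Fin.castLE hp j < k := by
          rw [Fin.lt_def]
          have h4 : (j : ℕ) ≠ (k : ℕ) := fun h => hjne (by ext; simpa using h)
          have h5 := Nat.lt_succ_iff.mp j.isLt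
          simpa using lt_of_le_of_ne h5 h4
        exact IH _ hjk z hz z₀ hz₀
      have hCpos : 0 < ∏ j ∈ Finset.univ.erase (Fin.last (k : ℕ)),
          sval (F z₀) (Fin.castLE hp j) :=
        Finset.prod_pos fun j _ => hpos j
      intro z hz w hw
      have hzz := hPconst z hz
      have hww := hPconst w hw
      rw [hsplit z, hC z hz] at hzz
      rw [hsplit w, hC w hw] at hww
      exact mul_right_cancel₀ (ne_of_gt hCpos) (hzz.trans hww.symm)
  have all : ∀ N : ℕ, ∀ k : Fin n, (k : ℕ) = N → (k : ℕ) < m →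
      ∀ z ∈ Ω, ∀ w ∈ Ω, sval (F z) k = sval (F w) k := by
    intro N
    induction N using Nat.strong_induction_on with
    | _ N ih =>
      intro k hkN hkm
      refine core k hkm fun j hj => ?_
      have hjk : (j : ℕ) < N := hkN ▸ hj
      exact ih (j : ℕ) hjk j rfl (by omega)
  intro k hk
  exact all (k : ℕ) k rfl hk
end

section
/- Let Ω be a region (nonempty open connected subset) of ℂ and let F : Ω → M_n(ℂ) be a nonconstant analytic function. If there is z₀ ∈ Ω such that for every k = 1, …, n the function z ↦ s_k(F(z)) attains its minimum value over Ω at z₀, then the matrix F(z₀) is not invertible. -/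
open scoped Matrix

attribute [local instance] Matrix.normedAddCommGroup Matrix.normedSpace

lemma sval_nonneg {n : ℕ} (A : Matrix (Fin n) (Fin n) ℂ) (k : Fin n) : 0 ≤ sval A k :=
  Real.sqrt_nonneg _

lemma det_herm {n : ℕ} (A : Matrix (Fin n) (Fin n) ℂ) :
    (Aᴴ * A).det = (Complex.normSq A.det : ℂ) := by
  rw [Matrix.det_mul, Matrix.det_conjTranspose]
  simp [← Complex.normSq_eq_conj_mul_self, Complex.star_def]

lemma prod_sval {n : ℕ} (A : Matrix (Fin n) (Fin n) ℂ) :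
    ∏ k, sval A k = ‖A.det‖ := by
  have hA := Matrix.isHermitian_conjTranspose_mul_self A
  have hnn : ∀ i, 0 ≤ hA.eigenvalues i := fun i =>
    Matrix.eigenvalues_conjTranspose_mul_self_nonneg A i
  set f : Fin n → ℝ := fun i => Real.sqrt (hA.eigenvalues i) with hf
  have h1 : ∏ k, sval A k = ∏ i, f i := by
    have := Equiv.prod_comp (Fin.revPerm.trans (Tuple.sort f)) f
    simpa [sval, Function.comp] using this
  have h2 : (∏ i, f i) ^ 2 = ∏ i, hA.eigenvalues i := by
    rw [← Finset.prod_pow]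
    exact Finset.prod_congr rfl fun i _ => Real.sq_sqrt (hnn i)
  have h3 : ((∏ i, hA.eigenvalues i : ℝ) : ℂ) = (Complex.normSq A.det : ℂ) := by
    rw [← det_herm A, hA.det_eq_prod_eigenvalues]
    norm_cast
  have h4 : ∏ i, hA.eigenvalues i = Complex.normSq A.det := by exact_mod_cast h3
  have h5 : (∏ i, f i) ^ 2 = ‖A.det‖ ^ 2 := by
    rw [h2, h4, Complex.sq_norm]
  rw [h1]
  exact (pow_left_inj₀ (Finset.prod_nonneg fun i _ => Real.sqrt_nonneg _)
    (norm_nonneg _) two_ne_zero).mp h5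

lemma trace_eq_sum_eig {n : ℕ} (A : Matrix (Fin n) (Fin n) ℂ) (hA : A.IsHermitian) :
    Matrix.trace A = ((∑ i, hA.eigenvalues i : ℝ) : ℂ) := by
  conv_lhs => rw [hA.spectral_theorem]
  rw [Unitary.conjStarAlgAut_apply, Matrix.trace_mul_comm, ← mul_assoc,
    Matrix.mem_unitaryGroup_iff'.mp hA.eigenvectorUnitary.2, one_mul,
    Matrix.trace_diagonal]
  push_cast
  rfl

lemma trace_conj_mul_re {n : ℕ} (A : Matrix (Fin n) (Fin n) ℂ) :
    (Matrix.trace (Aᴴ * A)).re = ∑ i, ∑ j, Complex.normSq (A i j) := by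
  rw [Matrix.trace, Complex.re_sum]
  rw [Finset.sum_comm]
  refine Finset.sum_congr rfl fun j _ => ?_
  simp only [Matrix.diag_apply, Matrix.mul_apply, Matrix.conjTranspose_apply, Complex.re_sum]
  refine Finset.sum_congr rfl fun i _ => ?_
  simp [← Complex.normSq_eq_conj_mul_self, Complex.star_def]

lemma sum_sq_sval {n : ℕ} (A : Matrix (Fin n) (Fin n) ℂ) :
    ∑ k, sval A k ^ 2 = ∑ i, ∑ j, Complex.normSq (A i j) := by
  have hA := Matrix.isHermitian_conjTranspose_mul_self A
  have hnn : ∀ i, 0 ≤ hA.eigenvalues i := fun i =>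
    Matrix.eigenvalues_conjTranspose_mul_self_nonneg A i
  set f : Fin n → ℝ := fun i => Real.sqrt (hA.eigenvalues i) with hf
  have h1 : ∑ k, sval A k ^ 2 = ∑ i, f i ^ 2 := by
    have := Equiv.sum_comp (Fin.revPerm.trans (Tuple.sort f)) (fun i => f i ^ 2)
    simpa [sval, Function.comp] using this
  have h2 : ∑ i, f i ^ 2 = ∑ i, hA.eigenvalues i :=
    Finset.sum_congr rfl fun i _ => Real.sq_sqrt (hnn i)
  have h3 : (Matrix.trace (Aᴴ * A)).re = ∑ i, hA.eigenvalues i := by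
    rw [trace_eq_sum_eig _ hA, Complex.ofReal_re]
  rw [h1, h2, ← h3, trace_conj_mul_re]

lemma diff_entry {n : ℕ} {F : ℂ → Matrix (Fin n) (Fin n) ℂ} {z : ℂ}
    (h : DifferentiableAt ℂ F z) (i j : Fin n) :
    DifferentiableAt ℂ (fun w => F w i j) z := by
  let L : Matrix (Fin n) (Fin n) ℂ →ₗ[ℂ] ℂ :=
    Matrix.entryLinearMap ℂ ℂ i j
  exact (LinearMap.toContinuousLinearMap L).differentiableAt.comp z h

lemma diff_det {n : ℕ} {F : ℂ → Matrix (Fin n) (Fin n) ℂ} {z : ℂ}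
    (h : DifferentiableAt ℂ F z) :
    DifferentiableAt ℂ (fun w => (F w).det) z := by
  simp only [Matrix.det_apply']
  apply DifferentiableAt.fun_sum
  intro σ _
  exact DifferentiableAt.const_mul (DifferentiableAt.fun_finsetProd (u := Finset.univ)
    (f := fun i w => F w (σ i) i) (fun i _ => diff_entry h (σ i) i)) _

/-- **Minimum singular value principle.** If `F` is a nonconstant analytic function on a region
`Ω` and there is a `z₀ ∈ Ω` at which every singular value function `z ↦ s_k(F z)` attains its
minimum over `Ω`, then `F z₀` is not invertible. -/
theorem minimum_singular_values_principle {n : ℕ} (Ω : Set ℂ) (hΩ : IsOpen Ω)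
    (hconn : IsConnected Ω) (F : ℂ → Matrix (Fin n) (Fin n) ℂ)
    (hF : ∀ z ∈ Ω, DifferentiableAt ℂ F z)
    (hnc : ¬ ∀ z ∈ Ω, ∀ w ∈ Ω, F z = F w)
    (z₀ : ℂ) (hz₀ : z₀ ∈ Ω)
    (hmin : ∀ k : Fin n, ∀ z ∈ Ω, sval (F z₀) k ≤ sval (F z) k) :
    ¬ IsUnit (F z₀) := by
  intro hU
  classical
  set d : ℂ → ℂ := fun z => (F z).det with hd
  have hd0 : d z₀ ≠ 0 := ((Matrix.isUnit_iff_isUnit_det _).mp hU).ne_zero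
  have habs_le : ∀ z ∈ Ω, ‖d z₀‖ ≤ ‖d z‖ := by
    intro z hz
    calc ‖(F z₀).det‖ = ∏ k, sval (F z₀) k := (prod_sval _).symm
      _ ≤ ∏ k, sval (F z) k :=
        Finset.prod_le_prod (fun k _ => sval_nonneg _ k) (fun k _ => hmin k z hz)
      _ = ‖(F z).det‖ := prod_sval _
  have habs_pos : 0 < ‖d z₀‖ := norm_pos_iff.mpr hd0
  have hdz : ∀ z ∈ Ω, d z ≠ 0 := by
    intro z hz h0
    have := habs_le z hz
    rw [h0] at this
    simp only [norm_zero] at this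
    exact absurd (lt_of_lt_of_le habs_pos this) (lt_irrefl 0)
  have hdiffinv : DifferentiableOn ℂ (fun z => (d z)⁻¹) Ω := fun z hz =>
    ((diff_det (hF z hz)).inv (hdz z hz)).differentiableWithinAt
  have hmaxd : IsMaxOn (norm ∘ fun z => (d z)⁻¹) Ω z₀ := by
    intro z hz
    simp only [Set.mem_setOf_eq, Function.comp_apply, norm_inv]
    exact inv_anti₀ habs_pos (habs_le z hz)
  have heqd := Complex.eqOn_of_isPreconnected_of_isMaxOn_norm hconn.isPreconnected hΩ
    hdiffinv hz₀ hmaxd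
  have habs_eq : ∀ z ∈ Ω, ‖d z‖ = ‖d z₀‖ := by
    intro z hz
    have h1 : (d z)⁻¹ = (d z₀)⁻¹ := heqd hz
    rw [inv_inj.mp h1]
  have hprod_pos : 0 < ∏ k, sval (F z₀) k := by
    rw [prod_sval]; exact habs_pos
  have hsv_pos : ∀ k, 0 < sval (F z₀) k := by
    intro k
    rcases (sval_nonneg (F z₀) k).lt_or_eq with h | h
    · exact h
    · rw [Finset.prod_eq_zero (Finset.mem_univ k) h.symm] at hprod_pos
      exact absurd hprod_pos (lt_irrefl 0)
  have hsv_eq : ∀ z ∈ Ω, ∀ k, sval (F z) k = sval (F z₀) k := by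
    intro z hz k
    by_contra hne
    have hlt : sval (F z₀) k < sval (F z) k := lt_of_le_of_ne (hmin k z hz) (Ne.symm hne)
    have : ∏ k, sval (F z₀) k < ∏ k, sval (F z) k :=
      Finset.prod_lt_prod (fun i _ => hsv_pos i) (fun i _ => hmin i z hz)
        ⟨k, Finset.mem_univ k, hlt⟩
    rw [prod_sval, prod_sval, habs_eq z hz] at this
    exact absurd this (lt_irrefl _)
  have hfrob : ∀ z ∈ Ω, ∑ i, ∑ j, Complex.normSq (F z i j)
      = ∑ i, ∑ j, Complex.normSq (F z₀ i j) := by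
    intro z hz
    rw [← sum_sq_sval, ← sum_sq_sval]
    exact Finset.sum_congr rfl fun k _ => by rw [hsv_eq z hz k]
  -- vectorization
  set v : ℂ → EuclideanSpace ℂ (Fin n × Fin n) :=
    fun ζ => (WithLp.equiv 2 _).symm (fun p => F ζ p.1 p.2) with hv
  have hv_apply : ∀ ζ p, v ζ p = F ζ p.1 p.2 := fun ζ p => rfl
  have hnormsq : ∀ ζ, ‖v ζ‖ ^ 2 = ∑ i, ∑ j, Complex.normSq (F ζ i j) := by
    intro ζ
    rw [EuclideanSpace.norm_eq, Real.sq_sqrt (Finset.sum_nonneg fun p _ => sq_nonneg _)]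
    rw [Fintype.sum_prod_type]
    refine Finset.sum_congr rfl fun i _ => Finset.sum_congr rfl fun j _ => ?_
    rw [hv_apply, Complex.sq_norm]
  have hnorm : ∀ ζ ∈ Ω, ‖v ζ‖ = ‖v z₀‖ := by
    intro ζ hζ
    refine (pow_left_inj₀ (norm_nonneg _) (norm_nonneg _) two_ne_zero).mp ?_
    rw [hnormsq, hnormsq]
    exact hfrob ζ hζ
  apply hnc
  intro z hz w hw
  set g : ℂ → ℂ :=
    fun ζ => ∑ p : Fin n × Fin n, (starRingEnd ℂ) (F w p.1 p.2) * F ζ p.1 p.2 with hg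
  have hg_inner : ∀ ζ, g ζ = inner (𝕜 := ℂ) (v w) (v ζ) := by
    intro ζ
    rw [PiLp.inner_apply, hg]
    refine Finset.sum_congr rfl fun p _ => ?_
    simp only [hv_apply, RCLike.inner_apply]
    ring
  have hgd : DifferentiableOn ℂ g Ω := fun ζ hζ =>
    (DifferentiableAt.fun_sum fun p _ =>
      (diff_entry (hF ζ hζ) p.1 p.2).const_mul _).differentiableWithinAt
  have hCbound : ∀ ζ ∈ Ω, ‖g ζ‖ ≤ ‖v z₀‖ ^ 2 := by
    intro ζ hζ
    rw [hg_inner]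
    calc ‖inner (𝕜 := ℂ) (v w) (v ζ)‖ ≤ ‖v w‖ * ‖v ζ‖ := norm_inner_le_norm _ _
      _ = ‖v z₀‖ ^ 2 := by rw [hnorm w hw, hnorm ζ hζ]; ring
  have hgw : g w = ((‖v z₀‖ ^ 2 : ℝ) : ℂ) := by
    rw [hg_inner, inner_self_eq_norm_sq_to_K, hnorm w hw]
    norm_cast
  have hmaxg : IsMaxOn (norm ∘ g) Ω w := by
    intro ζ hζ
    simp only [Set.mem_setOf_eq, Function.comp_apply, hgw]
    rw [Complex.norm_real, Real.norm_of_nonneg (sq_nonneg _)]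
    exact hCbound ζ hζ
  have heqg := Complex.eqOn_of_isPreconnected_of_isMaxOn_norm hconn.isPreconnected hΩ
    hgd hw hmaxg
  have hgz : g z = ((‖v z₀‖ ^ 2 : ℝ) : ℂ) := by
    have := heqg hz
    simp only [Function.const_apply] at this
    rw [this, hgw]
  have hre : (inner (𝕜 := ℂ) (v z) (v w)).re = ‖v z₀‖ ^ 2 := by
    have h1 : inner (𝕜 := ℂ) (v w) (v z) = ((‖v z₀‖ ^ 2 : ℝ) : ℂ) := by
      rw [← hg_inner]; exact hgz
    have h2 : (starRingEnd ℂ) (inner (𝕜 := ℂ) (v z) (v w)) = ((‖v z₀‖ ^ 2 : ℝ) : ℂ) := by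
      rw [inner_conj_symm]; exact h1
    calc (inner (𝕜 := ℂ) (v z) (v w)).re
        = ((starRingEnd ℂ) (inner (𝕜 := ℂ) (v z) (v w))).re := (Complex.conj_re _).symm
      _ = ‖v z₀‖ ^ 2 := by rw [h2, Complex.ofReal_re]
  have hsub : ‖v z - v w‖ ^ 2 = 0 := by
    rw [norm_sub_sq (𝕜 := ℂ), hnorm z hz, hnorm w hw]
    simp only [RCLike.re_to_complex]
    rw [hre]
    ring
  have hvzw : v z = v w := by
    have h0 : ‖v z - v w‖ = 0 := by
      have := sq_eq_zero_iff.mp hsub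
      exact this
    exact sub_eq_zero.mp (norm_eq_zero.mp h0)
  ext i j
  rw [← hv_apply z (i, j), ← hv_apply w (i, j), hvzw]
end

section
/- Let A ∈ M_n(ℂ) and let Ω be a region (nonempty open connected subset) of ℂ \ σ(A), where σ(A) is the spectrum of A. Then the operator norm of the resolvent R_A(z) = (A − zI)⁻¹ does not attain a maximum on Ω: there is no point z₀ ∈ Ω with ‖R_A(z)‖ ≤ ‖R_A(z₀)‖ for all z ∈ Ω. Equivalently, ‖R_A(z)‖ < sup_{ζ∈Ω} ‖R_A(ζ)‖ for every z ∈ Ω. -/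
open scoped Matrix

attribute [local instance] Matrix.normedAddCommGroup Matrix.normedSpace

/-- `toEuclideanCLM` commutes with `Ring.inverse` on units. -/
lemma toEuclideanCLM_ring_inverse {n : ℕ} (X : Matrix (Fin n) (Fin n) ℂ) (h : IsUnit X) :
    Matrix.toEuclideanCLM (𝕜 := ℂ) (Ring.inverse X)
      = Ring.inverse (Matrix.toEuclideanCLM (𝕜 := ℂ) X) := by
  obtain ⟨u, rfl⟩ := h
  let φ := Matrix.toEuclideanCLM (𝕜 := ℂ) (n := Fin n)
  let w : (EuclideanSpace ℂ (Fin n) →L[ℂ] EuclideanSpace ℂ (Fin n))ˣ :=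
    { val := φ ↑u
      inv := φ ↑u⁻¹
      val_inv := by rw [← map_mul, u.mul_inv, map_one]
      inv_val := by rw [← map_mul, u.inv_mul, map_one] }
  rw [Ring.inverse_unit u, show (φ (↑u : Matrix (Fin n) (Fin n) ℂ) : _) = ↑w from rfl,
    Ring.inverse_unit w]
  rfl

set_option maxHeartbeats 2000000 in
/-- The operator norm of the resolvent `R_A(z) = (A − z I)⁻¹` does not attain a maximum on any
region `Ω ⊆ ℂ \ σ(A)`: there is no `z₀ ∈ Ω` with `‖R_A z‖ ≤ ‖R_A z₀‖` for all `z ∈ Ω`. -/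
theorem resolvent_opNorm_no_maximum {n : ℕ} (hn : 0 < n)
    (A : Matrix (Fin n) (Fin n) ℂ) (Ω : Set ℂ) (hΩσ : Ω ⊆ (spectrum ℂ A)ᶜ)
    (hΩ : IsOpen Ω) (hconn : IsConnected Ω) :
    ¬ ∃ z₀ ∈ Ω, ∀ z ∈ Ω,
        opNorm ((A - z • (1 : Matrix (Fin n) (Fin n) ℂ))⁻¹) ≤
          opNorm ((A - z₀ • (1 : Matrix (Fin n) (Fin n) ℂ))⁻¹) := by
  rintro ⟨z₀, hz₀, hmax⟩
  haveI : Nonempty (Fin n) := ⟨⟨0, hn⟩⟩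
  set E := EuclideanSpace ℂ (Fin n)
  set φ := Matrix.toEuclideanCLM (𝕜 := ℂ) (n := Fin n) with hφ
  set B : ℂ → (E →L[ℂ] E) := fun z => φ A - z • 1 with hB
  set T : ℂ → (E →L[ℂ] E) := fun z => Ring.inverse (B z) with hT
  -- matrix `A - z•1` is a unit for `z ∈ Ω`
  have hmunit : ∀ z ∈ Ω, IsUnit (A - z • (1 : Matrix (Fin n) (Fin n) ℂ)) := by
    intro z hz
    have h1 : IsUnit (algebraMap ℂ (Matrix (Fin n) (Fin n) ℂ) z - A) := by
      have := hΩσ hz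
      simpa [spectrum.mem_iff, not_not] using this
    have := h1.neg
    simpa [Algebra.algebraMap_eq_smul_one, neg_sub] using this
  have hBm : ∀ z, B z = φ (A - z • (1 : Matrix (Fin n) (Fin n) ℂ)) := by
    intro z
    simp [hB, map_sub, map_smul, map_one]
  have hunit : ∀ z ∈ Ω, IsUnit (B z) := by
    intro z hz
    rw [hBm]
    exact (hmunit z hz).map φ
  -- opNorm of the matrix resolvent equals the norm of `T z`
  have hop : ∀ z ∈ Ω, opNorm ((A - z • (1 : Matrix (Fin n) (Fin n) ℂ))⁻¹) = ‖T z‖ := by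
    intro z hz
    rw [opNorm, Matrix.nonsing_inv_eq_ringInverse,
      toEuclideanCLM_ring_inverse _ (hmunit z hz), ← hBm z]
  set M : ℝ := ‖T z₀‖ with hM
  -- M > 0
  have hMpos : 0 < M := by
    rw [hM]
    rw [norm_pos_iff (a := T z₀)]
    intro h0
    have h1 := Ring.mul_inverse_cancel (B z₀) (hunit z₀ hz₀)
    rw [show Ring.inverse (B z₀) = T z₀ from rfl, h0, mul_zero] at h1
    have hx := congrArg (fun S : E →L[ℂ] E => S (EuclideanSpace.single (⟨0, hn⟩ : Fin n) 1)) h1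
    simp only [ContinuousLinearMap.zero_apply, ContinuousLinearMap.one_apply] at hx
    have hx2 := congrArg (fun x : E => x (⟨0, hn⟩ : Fin n)) hx
    simp only [EuclideanSpace.single_apply, if_pos rfl, PiLp.zero_apply] at hx2
    exact zero_ne_one (α := ℂ) (by exact hx2)
  -- pick a norm-attaining unit vector v
  obtain ⟨v, hv1, hvM⟩ : ∃ v : E, ‖v‖ = 1 ∧ ‖T z₀ v‖ = M := by
    obtain ⟨x₀, hx₀⟩ := exists_norm_eq E (zero_le_one' ℝ)
    have hsph : x₀ ∈ Metric.sphere (0 : E) 1 := by simp [hx₀]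
    obtain ⟨v, hv, hvmax⟩ := (isCompact_sphere (0 : E) 1).exists_isMaxOn ⟨x₀, hsph⟩
      ((T z₀).continuous.norm.continuousOn)
    have hv1 : ‖v‖ = 1 := by simpa using hv
    refine ⟨v, hv1, le_antisymm (by simpa [hv1] using (T z₀).le_opNorm v) ?_⟩
    refine (T z₀).opNorm_le_bound (norm_nonneg _) fun x => ?_
    rcases eq_or_ne x 0 with rfl | hx
    · simp
    · have hxn : ‖x‖ ≠ 0 := norm_ne_zero_iff.mpr hx
      set y : E := ((‖x‖ : ℂ))⁻¹ • x with hy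
      have hyn : ‖y‖ = 1 := by
        rw [hy, norm_smul]
        simp [hxn]
        rw [abs_norm, inv_mul_cancel₀ hxn]
      have hysph : y ∈ Metric.sphere (0 : E) 1 := by simp [hyn]
      have hle : ‖T z₀ y‖ ≤ ‖T z₀ v‖ := hvmax hysph
      have hxy : x = (‖x‖ : ℂ) • y := by
        rw [hy, smul_smul]
        rw [mul_inv_cancel₀ (by exact_mod_cast hxn), one_smul]
      calc ‖T z₀ x‖ = ‖x‖ * ‖T z₀ y‖ := by
            conv_lhs => rw [hxy, map_smul, norm_smul]
            simp
            exact Or.inl (norm_nonneg _)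
        _ ≤ ‖T z₀ v‖ * ‖x‖ := by
            rw [mul_comm]
            exact mul_le_mul_of_nonneg_right hle (norm_nonneg _)
  set u : E := ((M : ℂ))⁻¹ • T z₀ v with hu
  have hun : ‖u‖ = 1 := by
    rw [hu, norm_smul, hvM]
    simp [abs_of_pos hMpos, inv_mul_cancel₀ hMpos.ne']
  -- the holomorphic function g
  set g : ℂ → ℂ := fun z => inner (𝕜 := ℂ) u (T z v) with hg
  have hBdiff : Differentiable ℂ B := by
    exact (differentiable_const (φ A)).sub (differentiable_id.smul_const 1)
  have hgdiff : DifferentiableOn ℂ g Ω := by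
    intro z hz
    have hTz : DifferentiableAt ℂ T z := (hBdiff z).inverse (hunit z hz)
    have hF : DifferentiableAt ℂ (fun z => T z v) z := hTz.clm_apply (differentiableAt_const v)
    have : DifferentiableAt ℂ (fun z => (innerSL ℂ u) (T z v)) z :=
      ((innerSL ℂ u).differentiableAt).comp z hF
    exact this.differentiableWithinAt
  have hgz₀ : g z₀ = (M : ℂ) := by
    rw [hg]
    simp only [hu, inner_smul_left, inner_self_eq_norm_sq_to_K, hvM]
    rw [map_inv₀, Complex.conj_ofReal]
    have hMne : (M : ℂ) ≠ 0 := by exact_mod_cast hMpos.ne'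
    field_simp
    rfl
  have hgbound : ∀ z ∈ Ω, ‖g z‖ ≤ M := by
    intro z hz
    calc ‖g z‖ ≤ ‖u‖ * ‖T z v‖ := norm_inner_le_norm u (T z v)
      _ = ‖T z v‖ := by rw [hun, one_mul]
      _ ≤ ‖T z‖ * ‖v‖ := (T z).le_opNorm v
      _ = ‖T z‖ := by rw [hv1, mul_one]
      _ ≤ M := by
          have h := hmax z hz
          rw [hop z hz, hop z₀ hz₀] at h
          exact h
  have hgmax : IsMaxOn (norm ∘ g) Ω z₀ := by
    intro z hz
    have hgz₀n : ‖g z₀‖ = M := by rw [hgz₀]; simp [abs_of_pos hMpos]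
    simp only [Function.comp_apply, Set.mem_setOf_eq]
    rw [hgz₀n]
    exact hgbound z hz
  have hEq := Complex.eqOn_of_isPreconnected_of_isMaxOn_norm hconn.isPreconnected hΩ
    hgdiff hz₀ hgmax
  -- Cauchy–Schwarz equality: for all z ∈ Ω, T z v = M • u
  have hTv : ∀ z ∈ Ω, T z v = (M : ℂ) • u := by
    intro z hz
    have hgzM : g z = (M : ℂ) := by
      have := hEq hz
      simpa [hgz₀] using this
    set w : E := T z v with hwdef
    have hwM : ‖w‖ ≤ M := by
      calc ‖w‖ ≤ ‖T z‖ * ‖v‖ := (T z).le_opNorm v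
        _ = ‖T z‖ := by rw [hv1, mul_one]
        _ ≤ M := by
            have h := hmax z hz
            rw [hop z hz, hop z₀ hz₀] at h
            exact h
    have hiw : (inner ℂ w ((M : ℂ) • u) : ℂ) = (M : ℂ) ^ 2 := by
      rw [inner_smul_right, ← inner_conj_symm]
      rw [show (inner ℂ u w : ℂ) = (M : ℂ) from hgzM]
      rw [Complex.conj_ofReal]
      ring
    have hsq : ‖w - (M : ℂ) • u‖ ^ 2 ≤ 0 := by
      rw [@norm_sub_sq ℂ]
      have hre : RCLike.re (inner ℂ w ((M : ℂ) • u) : ℂ) = M ^ 2 := by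
        rw [hiw]
        simp [← Complex.ofReal_pow]
      rw [hre, norm_smul, hun]
      simp only [Complex.norm_real, mul_one, Real.norm_eq_abs, abs_of_pos hMpos]
      nlinarith [hwM, norm_nonneg w, hMpos]
    have : w - (M : ℂ) • u = 0 := by
      have := pow_eq_zero_iff (n := 2) (by norm_num) |>.mp
        (le_antisymm hsq (sq_nonneg _))
      exact norm_eq_zero.mp this
    exact sub_eq_zero.mp this
  -- pick z₁ ∈ Ω, z₁ ≠ z₀
  obtain ⟨ε, hε, hball⟩ := Metric.isOpen_iff.mp hΩ z₀ hz₀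
  set z₁ : ℂ := z₀ + (ε / 2 : ℝ) with hz₁def
  have hz₁ : z₁ ∈ Ω := by
    apply hball
    simp only [Metric.mem_ball, hz₁def, dist_eq_norm]
    rw [add_sub_cancel_left]
    rw [Complex.norm_real, Real.norm_eq_abs, abs_of_pos (by linarith)]
    linarith
  have hne : z₁ ≠ z₀ := by
    simp only [hz₁def, ne_eq, add_eq_left]
    exact_mod_cast (by positivity : (ε / 2 : ℝ) ≠ 0) ∘ (by exact_mod_cast ·)
  -- resolvent identity
  have hid : T z₁ - T z₀ = (z₁ - z₀) • (T z₁ * T z₀) := by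
    have h1 : T z₁ * B z₁ = 1 := Ring.inverse_mul_cancel (B z₁) (hunit z₁ hz₁)
    have h0 : B z₀ * T z₀ = 1 := Ring.mul_inverse_cancel (B z₀) (hunit z₀ hz₀)
    have hBdiffr : B z₀ - B z₁ = (z₁ - z₀) • (1 : E →L[ℂ] E) := by
      simp only [hB]
      module
    calc T z₁ - T z₀ = T z₁ * (B z₀ * T z₀) - T z₁ * B z₁ * T z₀ := by
          rw [h0, h1, mul_one, one_mul]
      _ = T z₁ * ((B z₀ - B z₁) * T z₀) := by
          conv_rhs => rw [sub_mul, mul_sub]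
          rw [mul_assoc]
      _ = (z₁ - z₀) • (T z₁ * T z₀) := by
          rw [hBdiffr, smul_mul_assoc, one_mul, mul_smul_comm]
  -- apply to v
  have happ : (0 : E) = ((z₁ - z₀) * M) • T z₁ u := by
    have h := congrArg (fun S : E →L[ℂ] E => S v) hid
    simp only [ContinuousLinearMap.sub_apply, ContinuousLinearMap.smul_apply,
      ContinuousLinearMap.mul_apply] at h
    rw [hTv z₁ hz₁, hTv z₀ hz₀, sub_self] at h
    rw [map_smul] at h
    rw [smul_smul] at h
    exact h
  have hTzu : T z₁ u = 0 := by
    have hne' : ((z₁ - z₀) * (M : ℂ)) ≠ 0 := by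
      apply mul_ne_zero (sub_ne_zero.mpr hne)
      exact_mod_cast hMpos.ne'
    have := happ.symm
    exact (smul_eq_zero.mp this).resolve_left hne'
  have : u = 0 := by
    have h0 : B z₁ * T z₁ = 1 := Ring.mul_inverse_cancel (B z₁) (hunit z₁ hz₁)
    have := congrArg (fun S : E →L[ℂ] E => S u) h0
    simp only [ContinuousLinearMap.mul_apply, ContinuousLinearMap.one_apply] at this
    rw [hTzu, map_zero] at this
    exact this.symm
  rw [this, norm_zero] at hun
  exact one_ne_zero hun.symm
end

section
/- Let A ∈ M_n(ℂ) and let Ω be a region (nonempty open connected subset) of ℂ \ σ(A), where σ(A) is the spectrum of A. Then the smallest singular value of the resolvent s_n(R_A(z)), where R_A(z) = (A − zI)⁻¹, does not attain a minimum on Ω: there is no point z₀ ∈ Ω with s_n(R_A(z₀)) ≤ s_n(R_A(z)) for all z ∈ Ω. Equivalently, s_n(R_A(z)) > inf_{ζ∈Ω} s_n(R_A(ζ)) for every z ∈ Ω. -/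
open scoped Matrix

section AuxSection
open scoped InnerProductSpace

namespace SvalAux

variable {m : ℕ} (B : Matrix (Fin m) (Fin m) ℂ)

noncomputable def toE : (Fin m → ℂ) ≃ EuclideanSpace ℂ (Fin m) := (WithLp.equiv 2 _).symm

lemma svalf {n : ℕ} (B : Matrix (Fin (n+1)) (Fin (n+1)) ℂ) :
    sval B (Fin.last n) =
      (fun i => Real.sqrt ((Matrix.isHermitian_conjTranspose_mul_self B).eigenvalues i))
        (Tuple.sort (fun i => Real.sqrt ((Matrix.isHermitian_conjTranspose_mul_self B).eigenvalues i)) 0) := by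
  simp [sval, Fin.rev_last]

lemma sval_last_le {n : ℕ} (B : Matrix (Fin (n+1)) (Fin (n+1)) ℂ) (i : Fin (n+1)) :
    sval B (Fin.last n) ≤ Real.sqrt ((Matrix.isHermitian_conjTranspose_mul_self B).eigenvalues i) := by
  set f : Fin (n+1) → ℝ := fun i =>
    Real.sqrt ((Matrix.isHermitian_conjTranspose_mul_self B).eigenvalues i) with hf
  rw [svalf]
  have := Tuple.monotone_sort f (Fin.zero_le ((Tuple.sort f).symm i))
  simpa using this

lemma exists_sval_last {n : ℕ} (B : Matrix (Fin (n+1)) (Fin (n+1)) ℂ) :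
    ∃ i, sval B (Fin.last n)
        = Real.sqrt ((Matrix.isHermitian_conjTranspose_mul_self B).eigenvalues i) :=
  ⟨_, svalf B⟩

lemma inner_mulVec_mulVec (x y : Fin m → ℂ) :
    ⟪toE (B *ᵥ x), toE (B *ᵥ y)⟫_ℂ = ⟪toE x, toE ((Bᴴ*B) *ᵥ y)⟫_ℂ := by
  rw [EuclideanSpace.inner_eq_star_dotProduct, EuclideanSpace.inner_eq_star_dotProduct]
  simp only [toE, Equiv.apply_symm_apply, WithLp.equiv_symm_apply, WithLp.ofLp_toLp]
  rw [Matrix.star_mulVec, dotProduct_comm, ← Matrix.dotProduct_mulVec, Matrix.mulVec_mulVec,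
    dotProduct_comm]

end SvalAux


namespace SvalAux2
open SvalAux
variable {m : ℕ} (B : Matrix (Fin m) (Fin m) ℂ)

noncomputable abbrev eig (i : Fin m) : ℝ := (Matrix.isHermitian_conjTranspose_mul_self B).eigenvalues i
noncomputable abbrev evb : OrthonormalBasis (Fin m) ℂ (EuclideanSpace ℂ (Fin m)) :=
  (Matrix.isHermitian_conjTranspose_mul_self B).eigenvectorBasis
noncomputable abbrev T : EuclideanSpace ℂ (Fin m) →ₗ[ℂ] EuclideanSpace ℂ (Fin m) :=
  Matrix.toEuclideanLin B

lemma inner_T (x y : EuclideanSpace ℂ (Fin m)) :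
    ⟪T B x, T B y⟫_ℂ = ⟪x, Matrix.toEuclideanLin (Bᴴ*B) y⟫_ℂ := by
  simp only [T, Matrix.toEuclideanLin_apply]
  simpa [toE] using inner_mulVec_mulVec B (WithLp.equiv 2 _ x) (WithLp.equiv 2 _ y)

lemma inner_T_basis (i j : Fin m) :
    ⟪T B (evb B i), T B (evb B j)⟫_ℂ = if i = j then ((eig B j : ℝ) : ℂ) else 0 := by
  rw [inner_T]
  have h1 : Matrix.toEuclideanLin (Bᴴ*B) (evb B j) = (eig B j : ℝ) • (evb B j) := by
    rw [Matrix.toEuclideanLin_apply,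
      (Matrix.isHermitian_conjTranspose_mul_self B).mulVec_eigenvectorBasis j]
    exact (WithLp.equiv 2 _).symm_apply_apply _ ▸ rfl
  rw [h1, RCLike.real_smul_eq_coe_smul (K := ℂ), inner_smul_right]
  have := (evb B).orthonormal
  rw [orthonormal_iff_ite] at this
  rw [this i j]
  by_cases h : i = j <;> simp [h]

lemma norm_T_sq (x : EuclideanSpace ℂ (Fin m)) :
    ‖T B x‖^2 = ∑ j, eig B j * ‖⟪evb B j, x⟫_ℂ‖^2 := by
  have hx : T B x = ∑ j, ⟪evb B j, x⟫_ℂ • T B (evb B j) := by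
    conv_lhs => rw [← (evb B).sum_repr' x]
    rw [map_sum]
    simp [LinearMap.map_smul]
  have : (‖T B x‖^2 : ℂ) = ⟪T B x, T B x⟫_ℂ := by
    rw [inner_self_eq_norm_sq_to_K]; norm_cast
  have h2 : ⟪T B x, T B x⟫_ℂ = ∑ j, ((eig B j : ℝ) : ℂ) * (‖⟪evb B j, x⟫_ℂ‖^2 : ℝ) := by
    rw [hx, sum_inner]
    congr 1; funext i
    rw [inner_sum]
    simp only [inner_smul_left, inner_smul_right, inner_T_basis]
    rw [Finset.sum_eq_single i]
    · rw [if_pos rfl, show ⟪(evb B) i, x⟫_ℂ * ((starRingEnd ℂ) ⟪(evb B) i, x⟫_ℂ * ↑(eig B i))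
          = (⟪(evb B) i, x⟫_ℂ * (starRingEnd ℂ) ⟪(evb B) i, x⟫_ℂ) * ↑(eig B i) from by ring,
        RCLike.mul_conj]
      push_cast
      exact mul_comm _ _
    · intro b _ hb; rw [if_neg (Ne.symm hb)]; ring
    · simp
  have h3 : (‖T B x‖^2 : ℂ) = ((∑ j, eig B j * ‖⟪evb B j, x⟫_ℂ‖^2 : ℝ) : ℂ) := by
    rw [this, h2]; push_cast; ring
  exact_mod_cast h3


lemma norm_sq_eq (x : EuclideanSpace ℂ (Fin m)) :
    ‖x‖^2 = ∑ j, ‖⟪evb B j, x⟫_ℂ‖^2 := by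
  have h := (evb B).repr.norm_map x
  rw [← h, EuclideanSpace.norm_eq, Real.sq_sqrt (by positivity)]
  congr 1; funext j; rw [(evb B).repr_apply_apply]

open scoped ComplexOrder in
lemma sval_mul_norm_le {n : ℕ} (B : Matrix (Fin (n+1)) (Fin (n+1)) ℂ)
    (x : EuclideanSpace ℂ (Fin (n+1))) :
    sval B (Fin.last n) * ‖x‖ ≤ ‖T B x‖ := by
  have hs0 : 0 ≤ sval B (Fin.last n) := by
    obtain ⟨i, hi⟩ := exists_sval_last B; rw [hi]; exact Real.sqrt_nonneg _
  have hsq : (sval B (Fin.last n))^2 * ‖x‖^2 ≤ ‖T B x‖^2 := by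
    rw [norm_T_sq, norm_sq_eq B x, Finset.mul_sum]
    apply Finset.sum_le_sum
    intro j _
    have h2 : (sval B (Fin.last n))^2 ≤ eig B j := by
      calc (sval B (Fin.last n))^2 ≤ (Real.sqrt (eig B j))^2 :=
            pow_le_pow_left₀ hs0 (sval_last_le B j) 2
      _ = eig B j := Real.sq_sqrt
            ((Matrix.posSemidef_conjTranspose_mul_self B).eigenvalues_nonneg j)
    exact mul_le_mul_of_nonneg_right h2 (by positivity)
  calc sval B (Fin.last n) * ‖x‖
      = Real.sqrt ((sval B (Fin.last n))^2 * ‖x‖^2) := by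
        rw [Real.sqrt_mul (by positivity), Real.sqrt_sq hs0, Real.sqrt_sq (norm_nonneg _)]
    _ ≤ Real.sqrt (‖T B x‖^2) := Real.sqrt_le_sqrt hsq
    _ = ‖T B x‖ := Real.sqrt_sq (norm_nonneg _)

lemma exists_unit_norm {n : ℕ} (B : Matrix (Fin (n+1)) (Fin (n+1)) ℂ) :
    ∃ v : EuclideanSpace ℂ (Fin (n+1)), ‖v‖ = 1 ∧ ‖T B v‖ = sval B (Fin.last n) := by
  obtain ⟨i, hi⟩ := exists_sval_last B
  refine ⟨evb B i, (evb B).orthonormal.1 i, ?_⟩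
  have horth := (evb B).orthonormal
  rw [orthonormal_iff_ite] at horth
  have h1 : ‖T B (evb B i)‖^2 = eig B i := by
    rw [norm_T_sq]
    rw [Finset.sum_eq_single i]
    · rw [horth i i, if_pos rfl]; simp
    · intro b _ hb; rw [horth b i, if_neg hb]; simp
    · simp
  have := congrArg Real.sqrt h1
  rwa [Real.sqrt_sq (norm_nonneg _), ← hi] at this

lemma sval_pos {n : ℕ} (B : Matrix (Fin (n+1)) (Fin (n+1)) ℂ) (hB : IsUnit B.det) :
    0 < sval B (Fin.last n) := by
  obtain ⟨v, hv1, hv2⟩ := exists_unit_norm B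
  rw [← hv2]
  rw [norm_pos_iff]
  intro h0
  have hv0 : v = 0 := by
    have h1 : Matrix.toEuclideanLin (B⁻¹ * B) v = 0 := by
      have : Matrix.toEuclideanLin (B⁻¹ * B) v
          = Matrix.toEuclideanLin B⁻¹ (Matrix.toEuclideanLin B v) := by
        simp [Matrix.toEuclideanLin_apply, Matrix.mulVec_mulVec]
      rw [this, show Matrix.toEuclideanLin B v = 0 from h0, map_zero]
    rwa [Matrix.nonsing_inv_mul B hB, show Matrix.toEuclideanLin (1 : Matrix (Fin (n+1)) (Fin (n+1)) ℂ) v = v from by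
      simp [Matrix.toEuclideanLin_apply]] at h1
  rw [hv0, norm_zero] at hv1
  exact one_ne_zero hv1.symm

end SvalAux2

end AuxSection

attribute [local instance] Matrix.normedAddCommGroup Matrix.normedSpace

/-- The smallest singular value of the resolvent `R_A(z) = (A − z I)⁻¹` does not attain a
minimum on any region `Ω ⊆ ℂ \ σ(A)`: there is no `z₀ ∈ Ω` with
`sₙ(R_A z₀) ≤ sₙ(R_A z)` for all `z ∈ Ω`.  (Matrices here have size `n + 1`, so the smallest
singular value is the one with index `Fin.last n`.) -/
theorem resolvent_smallest_singular_value_no_minimum {n : ℕ}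
    (A : Matrix (Fin (n + 1)) (Fin (n + 1)) ℂ) (Ω : Set ℂ) (hΩσ : Ω ⊆ (spectrum ℂ A)ᶜ)
    (hΩ : IsOpen Ω) (hconn : IsConnected Ω) :
    ¬ ∃ z₀ ∈ Ω, ∀ z ∈ Ω,
        sval ((A - z₀ • (1 : Matrix (Fin (n + 1)) (Fin (n + 1)) ℂ))⁻¹) (Fin.last n) ≤
          sval ((A - z • (1 : Matrix (Fin (n + 1)) (Fin (n + 1)) ℂ))⁻¹) (Fin.last n) := by
  classical
  rintro ⟨z₀, hz₀, hmin⟩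
  set M : ℂ → Matrix (Fin (n + 1)) (Fin (n + 1)) ℂ :=
    fun z => A - z • (1 : Matrix (Fin (n + 1)) (Fin (n + 1)) ℂ) with hM
  -- invertibility on Ω
  have hdet : ∀ z ∈ Ω, IsUnit (M z).det := by
    intro z hz
    have h1 : z ∉ spectrum ℂ A := hΩσ hz
    rw [spectrum.notMem_iff] at h1
    rw [Algebra.algebraMap_eq_smul_one] at h1
    have h2 : IsUnit (M z) := by
      have := h1.neg
      rwa [neg_sub] at this
    exact (Matrix.isUnit_iff_isUnit_det _).mp h2
  set s : ℂ → ℝ := fun z => sval ((M z)⁻¹) (Fin.last n) with hs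
  have hs0 : 0 < s z₀ := SvalAux2.sval_pos _ ((Matrix.isUnit_nonsing_inv_det _ (hdet z₀ hz₀)))
  -- the composition identity
  have hcomp : ∀ z ∈ Ω, ∀ y : EuclideanSpace ℂ (Fin (n + 1)),
      Matrix.toEuclideanLin ((M z)⁻¹) (Matrix.toEuclideanLin (M z) y) = y := by
    intro z hz y
    have : Matrix.toEuclideanLin ((M z)⁻¹) (Matrix.toEuclideanLin (M z) y)
        = Matrix.toEuclideanLin ((M z)⁻¹ * M z) y := by
      simp [Matrix.toEuclideanLin_apply, Matrix.mulVec_mulVec]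
    rw [this, Matrix.nonsing_inv_mul _ (hdet z hz)]
    simp [Matrix.toEuclideanLin_apply]
  -- uniform bound
  have hbound : ∀ z ∈ Ω, ∀ y : EuclideanSpace ℂ (Fin (n + 1)),
      ‖Matrix.toEuclideanLin (M z) y‖ ≤ (s z₀)⁻¹ * ‖y‖ := by
    intro z hz y
    have h1 : s z * ‖Matrix.toEuclideanLin (M z) y‖
        ≤ ‖Matrix.toEuclideanLin ((M z)⁻¹) (Matrix.toEuclideanLin (M z) y)‖ :=
      SvalAux2.sval_mul_norm_le _ _
    rw [hcomp z hz y] at h1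
    have h2 : s z₀ * ‖Matrix.toEuclideanLin (M z) y‖ ≤ ‖y‖ :=
      le_trans (mul_le_mul_of_nonneg_right (hmin z hz) (norm_nonneg _)) h1
    rw [← le_div_iff₀' hs0] at h2
    rw [div_eq_inv_mul] at h2
    exact h2
  -- the maximizing vector
  obtain ⟨v, hv1, hv2⟩ := SvalAux2.exists_unit_norm ((M z₀)⁻¹)
  set x₀ : EuclideanSpace ℂ (Fin (n + 1)) :=
    ((s z₀ : ℂ))⁻¹ • Matrix.toEuclideanLin ((M z₀)⁻¹) v with hx₀
  have hx₀norm : ‖x₀‖ = 1 := by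
    rw [hx₀, norm_smul, hv2, norm_inv, Complex.norm_real, Real.norm_eq_abs, abs_of_pos hs0]
    exact inv_mul_cancel₀ hs0.ne'
  have hMx₀ : Matrix.toEuclideanLin (M z₀) x₀ = ((s z₀ : ℂ))⁻¹ • v := by
    rw [hx₀, map_smul]
    congr 1
    have : Matrix.toEuclideanLin (M z₀) (Matrix.toEuclideanLin ((M z₀)⁻¹) v)
        = Matrix.toEuclideanLin (M z₀ * (M z₀)⁻¹) v := by
      simp [Matrix.toEuclideanLin_apply, Matrix.mulVec_mulVec]
    rw [this, Matrix.mul_nonsing_inv _ (hdet z₀ hz₀)]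
    simp [Matrix.toEuclideanLin_apply]
  have hMx₀norm : ‖Matrix.toEuclideanLin (M z₀) x₀‖ = (s z₀)⁻¹ := by
    rw [hMx₀, norm_smul, hv1, mul_one, norm_inv, Complex.norm_real, Real.norm_eq_abs,
      abs_of_pos hs0]
  -- the analytic function
  set h : ℂ → EuclideanSpace ℂ (Fin (n + 1)) :=
    fun z => Matrix.toEuclideanLin A x₀ - z • x₀ with hh
  have hhM : ∀ z, h z = Matrix.toEuclideanLin (M z) x₀ := by
    intro z
    rw [hh, hM]
    simp only [Matrix.toEuclideanLin_apply, Matrix.sub_mulVec, Matrix.smul_mulVec,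
      Matrix.one_mulVec, WithLp.toLp_sub, WithLp.toLp_smul, WithLp.toLp_ofLp,
      Equiv.symm_apply_apply]
  have hdiff : DifferentiableOn ℂ h Ω := by
    apply Differentiable.differentiableOn
    exact (differentiable_const _).sub (differentiable_id.smul_const x₀)
  have hmax : IsMaxOn (norm ∘ h) Ω z₀ := by
    intro z hz
    simp only [Function.comp_apply, Set.mem_setOf_eq]
    rw [hhM z, hhM z₀, hMx₀norm]
    calc ‖Matrix.toEuclideanLin (M z) x₀‖ ≤ (s z₀)⁻¹ * ‖x₀‖ := hbound z hz x₀
      _ = (s z₀)⁻¹ := by rw [hx₀norm, mul_one]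
  have heq := Complex.eqOn_of_isPreconnected_of_isMaxOn_norm hconn.isPreconnected hΩ hdiff hz₀ hmax
  -- two points
  obtain ⟨r, hr, hball⟩ := Metric.isOpen_iff.mp hΩ z₀ hz₀
  have hz₁ : z₀ + (r:ℂ) / 2 ∈ Ω := by
    apply hball
    rw [Metric.mem_ball, dist_eq_norm]
    rw [show z₀ + (r:ℂ)/2 - z₀ = (((r/2 : ℝ)) : ℂ) from by push_cast; ring]
    rw [Complex.norm_real, Real.norm_eq_abs, abs_of_pos (by linarith)]
    linarith
  have h1 := heq hz₁
  have h2 := heq hz₀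
  rw [Function.const_apply] at h1 h2
  have h3 : (z₀ + (r:ℂ)/2) • x₀ = z₀ • x₀ := by
    have := h1.trans h2.symm
    rw [hh] at this
    simpa only [sub_right_inj] using this
  have h4 : ((r:ℂ)/2) • x₀ = 0 := by
    rw [add_smul] at h3
    exact add_eq_left.mp h3
  have h5 : x₀ = 0 := by
    rcases smul_eq_zero.mp h4 with hc | hx
    · exfalso
      have hr0 : (r:ℂ) ≠ 0 := by exact_mod_cast hr.ne'
      apply hr0
      field_simp at hc
      simpa using hc
    · exact hx
  rw [h5, norm_zero] at hx₀norm
  exact one_ne_zero hx₀norm.symm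
end
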